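/- arXiv:1709.01610 — 9 statements merged into one kernel-verified Lean document; each statement's English description precedes it below -/
import Mathlib

section
/- Let H ∈ ℝ^{n×n} be symmetric positive definite, P ∈ ℝ^{m×m} symmetric with 0 ⪯ P ⪯ I, T ∈ ℝ^{m×n} full row rank, and μ > 0. Then the block matrix M = [[H + (1/μ)Tᵀ(I−P)T, Tᵀ(I−P)], [(I−P)T, −μP]] is invertible. -/
open Matrix

lemma transpose_mulVec_eq_zero {n m : ℕ} (T : Matrix (Fin m) (Fin n) ℝ) (hT : T.rank = m)
    {y : Fin m → ℝ} (h : Tᵀ *ᵥ y = 0) : y = 0 := by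
  have hA : (T * Tᵀ).rank = m := by rw [Matrix.rank_self_mul_transpose, hT]
  have hsurj : Function.Surjective (T * Tᵀ).mulVecLin := by
    rw [← LinearMap.range_eq_top]
    apply Submodule.eq_top_of_finrank_eq
    rw [← Matrix.rank, hA]
    simp [Module.finrank_fintype_fun_eq_card]
  have hinj : Function.Injective (T * Tᵀ).mulVecLin :=
    (LinearMap.injective_iff_surjective).mpr hsurj
  have h0 : (T * Tᵀ).mulVecLin y = (T * Tᵀ).mulVecLin 0 := by
    simp only [mulVecLin_apply, ← Matrix.mulVec_mulVec, h, Matrix.mulVec_zero]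
  exact hinj h0

/-- The block matrix `[[H + μ⁻¹ Tᵀ(I−P)T, Tᵀ(I−P)], [(I−P)T, −μP]]` is invertible when
`H ≻ 0`, `0 ⪯ P ⪯ I`, `T` has full row rank, and `μ > 0`. -/
theorem block_matrix_invertible {n m : ℕ} (μ : ℝ) (hμ : 0 < μ)
    (H : Matrix (Fin n) (Fin n) ℝ) (P : Matrix (Fin m) (Fin m) ℝ)
    (T : Matrix (Fin m) (Fin n) ℝ)
    (hH : H.PosDef) (hP : P.PosSemidef) (hIP : (1 - P).PosSemidef)
    (hT : T.rank = m) :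
    IsUnit (Matrix.fromBlocks
      (H + μ⁻¹ • (Tᵀ * (1 - P) * T)) (Tᵀ * (1 - P))
      ((1 - P) * T) (-(μ • P))) := by
  set Q := (1 : Matrix (Fin m) (Fin m) ℝ) - P with hQ
  rw [← Matrix.mulVec_injective_iff_isUnit]
  have key : ∀ v, (Matrix.fromBlocks (H + μ⁻¹ • (Tᵀ * Q * T)) (Tᵀ * Q) (Q * T) (-(μ • P))) *ᵥ v = 0 → v = 0 := by
    intro v hv
    rw [Matrix.fromBlocks_mulVec] at hv
    set x := v ∘ Sum.inl with hx
    set y := v ∘ Sum.inr with hy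
    have eq1 : (H + μ⁻¹ • (Tᵀ * Q * T)) *ᵥ x + (Tᵀ * Q) *ᵥ y = 0 :=
      funext fun i => congrFun hv (Sum.inl i)
    have eq2 : (Q * T) *ᵥ x + (-(μ • P)) *ᵥ y = 0 :=
      funext fun i => congrFun hv (Sum.inr i)
    set a := T *ᵥ x with ha
    have hQsymm : Qᵀ = Q := hIP.1
    have hxQTx : x ⬝ᵥ ((Tᵀ * Q * T) *ᵥ x) = a ⬝ᵥ (Q *ᵥ a) := by
      rw [← Matrix.mulVec_mulVec, ← Matrix.mulVec_mulVec, Matrix.dotProduct_mulVec,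
        Matrix.vecMul_transpose]
    have cross1 : x ⬝ᵥ ((Tᵀ * Q) *ᵥ y) = a ⬝ᵥ (Q *ᵥ y) := by
      rw [← Matrix.mulVec_mulVec, Matrix.dotProduct_mulVec, Matrix.vecMul_transpose]
    have cross2 : y ⬝ᵥ ((Q * T) *ᵥ x) = a ⬝ᵥ (Q *ᵥ y) := by
      rw [← Matrix.mulVec_mulVec, Matrix.dotProduct_mulVec, ← Matrix.mulVec_transpose,
        hQsymm, dotProduct_comm]
    have s1 : x ⬝ᵥ (H *ᵥ x) + μ⁻¹ * (a ⬝ᵥ (Q *ᵥ a)) + a ⬝ᵥ (Q *ᵥ y) = 0 := by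
      have h1 := congrArg (fun w => x ⬝ᵥ w) eq1
      simpa [Matrix.add_mulVec, Matrix.smul_mulVec, dotProduct_add, dotProduct_smul,
        smul_eq_mul, hxQTx, cross1] using h1
    have s2 : a ⬝ᵥ (Q *ᵥ y) = μ * (y ⬝ᵥ (P *ᵥ y)) := by
      have h2 := congrArg (fun w => y ⬝ᵥ w) eq2
      simp only [dotProduct_add, Matrix.neg_mulVec, dotProduct_neg, cross2,
        Matrix.smul_mulVec, dotProduct_smul, smul_eq_mul, dotProduct_zero] at h2
      linarith
    have nH : (0:ℝ) ≤ x ⬝ᵥ (H *ᵥ x) := by simpa using hH.posSemidef.dotProduct_mulVec_nonneg x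
    have nQa : (0:ℝ) ≤ a ⬝ᵥ (Q *ᵥ a) := by simpa using hIP.dotProduct_mulVec_nonneg a
    have nPy : (0:ℝ) ≤ y ⬝ᵥ (P *ᵥ y) := by simpa using hP.dotProduct_mulVec_nonneg y
    have hsum : x ⬝ᵥ (H *ᵥ x) + μ⁻¹ * (a ⬝ᵥ (Q *ᵥ a)) + μ * (y ⬝ᵥ (P *ᵥ y)) = 0 := by
      rw [← s2]; exact s1
    have hμi : (0:ℝ) < μ⁻¹ := inv_pos.mpr hμ
    have t1 : (0:ℝ) ≤ μ⁻¹ * (a ⬝ᵥ (Q *ᵥ a)) := mul_nonneg hμi.le nQa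
    have t2 : (0:ℝ) ≤ μ * (y ⬝ᵥ (P *ᵥ y)) := mul_nonneg hμ.le nPy
    have hxH : x ⬝ᵥ (H *ᵥ x) = 0 := by linarith
    have hx0 : x = 0 := by
      by_contra hne
      have := hH.dotProduct_mulVec_pos hne
      simp only [star_trivial, RCLike.ofReal_real_eq_id, id] at this
      · linarith
    have hPy0 : y ⬝ᵥ (P *ᵥ y) = 0 := by
      have hm : μ * (y ⬝ᵥ (P *ᵥ y)) = 0 := by linarith
      exact (mul_eq_zero.mp hm).resolve_left hμ.ne'
    have hPy : P *ᵥ y = 0 := (hP.dotProduct_mulVec_zero_iff y).mp (by simpa using hPy0)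
    have hQy : Q *ᵥ y = y := by
      rw [hQ, Matrix.sub_mulVec, Matrix.one_mulVec, hPy, sub_zero]
    have hTy : Tᵀ *ᵥ y = 0 := by
      have := eq1
      rw [hx0] at this
      simpa [Matrix.mulVec_zero, ← Matrix.mulVec_mulVec, hQy] using this
    have hy0 : y = 0 := transpose_mulVec_eq_zero T hT hTy
    funext i
    rcases i with i | i
    · exact congrFun hx0 i
    · exact congrFun hy0 i
  intro u w huw
  have h0 : (Matrix.fromBlocks (H + μ⁻¹ • (Tᵀ * Q * T)) (Tᵀ * Q) (Q * T) (-(μ • P))) *ᵥ (u - w) = 0 := by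
    rw [Matrix.mulVec_sub, huw, sub_self]
  exact sub_eq_zero.mp (key _ h0)
end

section
/- Under the same hypotheses (H ≻ 0, 0 ⪯ P ⪯ I symmetric, T full row rank, μ > 0), the block matrix [[H + (1/μ)Tᵀ(I−P)T, Tᵀ(I−P)], [(I−P)T, −μP]] has exactly n positive eigenvalues and m negative eigenvalues. -/
open Matrix

lemma quadform_eq_sum_eigen {ι : Type*} [Fintype ι] [DecidableEq ι]
    {M : Matrix ι ι ℝ} (hM : M.IsHermitian) (x : ι → ℝ) :
    x ⬝ᵥ M *ᵥ x = ∑ i, hM.eigenvalues i *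
      (((hM.eigenvectorUnitary : Matrix ι ι ℝ)ᵀ *ᵥ x) i) ^ 2 := by
  set U : Matrix ι ι ℝ := (hM.eigenvectorUnitary : Matrix ι ι ℝ) with hU
  have hstar : star U = Uᵀ := by
    rw [star_eq_conjTranspose, conjTranspose_eq_transpose_of_trivial]
  conv_lhs => rw [hM.spectral_theorem, Unitary.conjStarAlgAut_apply, ← hU]
  rw [hstar, ← mulVec_mulVec, ← mulVec_mulVec, dotProduct_mulVec, ← mulVec_transpose]
  simp only [dotProduct, mulVec_diagonal, Function.comp_apply, RCLike.ofReal_real_eq_id, id]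
  exact Finset.sum_congr rfl fun i _ => by ring

-- one-sided bound: a positive-definite subspace of dim p forces at least p positive eigenvalues
lemma le_card_pos {ι : Type*} [Fintype ι] [DecidableEq ι] {p : ℕ}
    {M : Matrix ι ι ℝ} (hM : M.IsHermitian)
    (X : Matrix ι (Fin p) ℝ) (hX : (Xᵀ * M * X).PosDef) :
    p ≤ Fintype.card {i // 0 < hM.eigenvalues i} := by
  classical
  set U : Matrix ι ι ℝ := (hM.eigenvectorUnitary : Matrix ι ι ℝ) with hU
  set f : (Fin p → ℝ) →ₗ[ℝ] ({i // 0 < hM.eigenvalues i} → ℝ) :=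
    (LinearMap.funLeft ℝ ℝ (Subtype.val)).comp (Matrix.mulVecLin (Uᵀ * X)) with hf
  have hinj : Function.Injective f := by
    rw [← LinearMap.ker_eq_bot, Submodule.eq_bot_iff]
    intro y hy
    by_contra hy0
    have hpos : 0 < y ⬝ᵥ (Xᵀ * M * X) *ᵥ y := by
      simpa using hX.dotProduct_mulVec_pos hy0
    have hq : y ⬝ᵥ (Xᵀ * M * X) *ᵥ y = (X *ᵥ y) ⬝ᵥ M *ᵥ (X *ᵥ y) := by
      rw [← mulVec_mulVec, ← mulVec_mulVec, dotProduct_mulVec, ← mulVec_transpose,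
        transpose_transpose]
    have hzero : ∀ i : ι, 0 < hM.eigenvalues i → (Uᵀ *ᵥ (X *ᵥ y)) i = 0 := by
      intro i hi
      have := congrFun (LinearMap.mem_ker.mp hy) ⟨i, hi⟩
      simpa [f, LinearMap.funLeft, mulVecLin_apply, ← mulVec_mulVec, mulVec_transpose] using this
    have hle : (X *ᵥ y) ⬝ᵥ M *ᵥ (X *ᵥ y) ≤ 0 := by
      rw [quadform_eq_sum_eigen hM]
      apply Finset.sum_nonpos
      intro i _
      rcases lt_or_ge 0 (hM.eigenvalues i) with h | h
      · rw [hzero i h]; simp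
      · exact mul_nonpos_of_nonpos_of_nonneg h (sq_nonneg _)
    rw [hq] at hpos; linarith
  calc p = Module.finrank ℝ (Fin p → ℝ) := by simp
    _ ≤ Module.finrank ℝ ({i // 0 < hM.eigenvalues i} → ℝ) :=
        LinearMap.finrank_le_finrank_of_injective hinj
    _ = Fintype.card {i // 0 < hM.eigenvalues i} := by simp

lemma le_card_neg {ι : Type*} [Fintype ι] [DecidableEq ι] {q : ℕ}
    {M : Matrix ι ι ℝ} (hM : M.IsHermitian)
    (Y : Matrix ι (Fin q) ℝ) (hY : (-(Yᵀ * M * Y)).PosDef) :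
    q ≤ Fintype.card {i // hM.eigenvalues i < 0} := by
  classical
  set U : Matrix ι ι ℝ := (hM.eigenvectorUnitary : Matrix ι ι ℝ) with hU
  set f : (Fin q → ℝ) →ₗ[ℝ] ({i // hM.eigenvalues i < 0} → ℝ) :=
    (LinearMap.funLeft ℝ ℝ (Subtype.val)).comp (Matrix.mulVecLin (Uᵀ * Y)) with hf
  have hinj : Function.Injective f := by
    rw [← LinearMap.ker_eq_bot, Submodule.eq_bot_iff]
    intro y hy
    by_contra hy0
    have hpos : 0 < y ⬝ᵥ (-(Yᵀ * M * Y)) *ᵥ y := by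
      simpa using hY.dotProduct_mulVec_pos hy0
    have hneg : y ⬝ᵥ (Yᵀ * M * Y) *ᵥ y < 0 := by
      rw [neg_mulVec, dotProduct_neg] at hpos; linarith
    have hq : y ⬝ᵥ (Yᵀ * M * Y) *ᵥ y = (Y *ᵥ y) ⬝ᵥ M *ᵥ (Y *ᵥ y) := by
      rw [← mulVec_mulVec, ← mulVec_mulVec, dotProduct_mulVec, ← mulVec_transpose,
        transpose_transpose]
    have hzero : ∀ i : ι, hM.eigenvalues i < 0 → (Uᵀ *ᵥ (Y *ᵥ y)) i = 0 := by
      intro i hi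
      have := congrFun (LinearMap.mem_ker.mp hy) ⟨i, hi⟩
      simpa [f, LinearMap.funLeft, mulVecLin_apply, ← mulVec_mulVec, mulVec_transpose] using this
    have hle : 0 ≤ (Y *ᵥ y) ⬝ᵥ M *ᵥ (Y *ᵥ y) := by
      rw [quadform_eq_sum_eigen hM]
      apply Finset.sum_nonneg
      intro i _
      rcases lt_or_ge (hM.eigenvalues i) 0 with h | h
      · rw [hzero i h]; simp
      · exact mul_nonneg h (sq_nonneg _)
    rw [hq] at hneg; linarith
  calc q = Module.finrank ℝ (Fin q → ℝ) := by simp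
    _ ≤ Module.finrank ℝ ({i // hM.eigenvalues i < 0} → ℝ) :=
        LinearMap.finrank_le_finrank_of_injective hinj
    _ = Fintype.card {i // hM.eigenvalues i < 0} := by simp

lemma inertia_aux {ι : Type*} [Fintype ι] [DecidableEq ι] {p q : ℕ}
    (hc : Fintype.card ι = p + q)
    {M : Matrix ι ι ℝ} (hM : M.IsHermitian)
    (X : Matrix ι (Fin p) ℝ) (Y : Matrix ι (Fin q) ℝ)
    (hX : (Xᵀ * M * X).PosDef) (hY : (-(Yᵀ * M * Y)).PosDef) :
    {i | 0 < hM.eigenvalues i}.ncard = p ∧ {i | hM.eigenvalues i < 0}.ncard = q := by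
  classical
  have h1 : p ≤ Fintype.card {i // 0 < hM.eigenvalues i} := le_card_pos hM X hX
  have h2 : q ≤ Fintype.card {i // hM.eigenvalues i < 0} := le_card_neg hM Y hY
  have e1 : {i | 0 < hM.eigenvalues i}.ncard = Fintype.card {i // 0 < hM.eigenvalues i} := by
    rw [← Nat.card_coe_set_eq, Nat.card_eq_fintype_card]
    exact Fintype.card_congr (Equiv.refl _)
  have e2 : {i | hM.eigenvalues i < 0}.ncard = Fintype.card {i // hM.eigenvalues i < 0} := by
    rw [← Nat.card_coe_set_eq, Nat.card_eq_fintype_card]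
    exact Fintype.card_congr (Equiv.refl _)
  have hdisj : Disjoint {i | 0 < hM.eigenvalues i} {i | hM.eigenvalues i < 0} := by
    rw [Set.disjoint_left]
    intro i hi hi'
    simp only [Set.mem_setOf_eq] at hi hi'
    linarith
  have hsum : {i | 0 < hM.eigenvalues i}.ncard + {i | hM.eigenvalues i < 0}.ncard ≤ p + q := by
    rw [← Set.ncard_union_eq hdisj (Set.toFinite _) (Set.toFinite _), ← hc]
    calc ({i | 0 < hM.eigenvalues i} ∪ {i | hM.eigenvalues i < 0}).ncard
        ≤ (Set.univ : Set ι).ncard := Set.ncard_le_ncard (Set.subset_univ _) (Set.toFinite _)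
      _ = Fintype.card ι := by rw [Set.ncard_univ, Nat.card_eq_fintype_card]
  rw [e1, e2] at hsum ⊢
  omega

/-- The block matrix `[[H + μ⁻¹ Tᵀ(I−P)T, Tᵀ(I−P)], [(I−P)T, −μP]]` has exactly `n` positive
eigenvalues and `m` negative eigenvalues when `H ≻ 0`, `0 ⪯ P ⪯ I`, `T` has full row rank,
and `μ > 0`. -/
theorem block_matrix_inertia {n m : ℕ} (μ : ℝ) (hμ : 0 < μ)
    (H : Matrix (Fin n) (Fin n) ℝ) (P : Matrix (Fin m) (Fin m) ℝ)
    (T : Matrix (Fin m) (Fin n) ℝ)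
    (hH : H.PosDef) (hP : P.PosSemidef) (hIP : (1 - P).PosSemidef)
    (hT : T.rank = m)
    (hM : (Matrix.fromBlocks
      (H + μ⁻¹ • (Tᵀ * (1 - P) * T)) (Tᵀ * (1 - P))
      ((1 - P) * T) (-(μ • P))).IsHermitian) :
    {i | 0 < hM.eigenvalues i}.ncard = n ∧ {i | hM.eigenvalues i < 0}.ncard = m := by
  classical
  set A : Matrix (Fin n) (Fin n) ℝ := H + μ⁻¹ • (Tᵀ * (1 - P) * T) with hA_def
  set B : Matrix (Fin n) (Fin m) ℝ := Tᵀ * (1 - P) with hB_def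
  set C : Matrix (Fin m) (Fin n) ℝ := (1 - P) * T with hC_def
  set D : Matrix (Fin m) (Fin m) ℝ := -(μ • P) with hD_def
  -- basic transpose facts
  have hIPt : (1 - P)ᵀ = 1 - P := by
    have := hIP.1
    rwa [IsHermitian, conjTranspose_eq_transpose_of_trivial] at this
  have hCBt : C = Bᵀ := by
    rw [hB_def, hC_def, transpose_mul, transpose_transpose, hIPt]
  -- A is positive definite
  have hTIPT : (Tᵀ * (1 - P) * T).PosSemidef := by
    have := hIP.conjTranspose_mul_mul_same T
    rwa [conjTranspose_eq_transpose_of_trivial] at this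
  have hsmul : (μ⁻¹ • (Tᵀ * (1 - P) * T)).PosSemidef := by
    refine PosSemidef.of_dotProduct_mulVec_nonneg ?_ ?_
    · have h1 := hTIPT.1
      rw [IsHermitian] at h1 ⊢
      rw [conjTranspose_smul, h1]
      simp
    · intro x
      have := hTIPT.dotProduct_mulVec_nonneg x
      rw [smul_mulVec, dotProduct_smul]
      exact smul_nonneg (by positivity) this
  have hA : A.PosDef := hH.add_posSemidef hsmul
  have hAdet : IsUnit A.det := isUnit_iff_ne_zero.mpr hA.det_pos.ne'
  have hAinv : (A⁻¹).PosDef := hA.inv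
  -- injectivity of Tᵀ
  have hTinj : ∀ v : Fin m → ℝ, Tᵀ *ᵥ v = 0 → v = 0 := by
    intro v hv
    have hrank : Tᵀ.rank = m := by rw [rank_transpose, hT]
    have h1 : Module.finrank ℝ (LinearMap.range Tᵀ.mulVecLin) +
        Module.finrank ℝ (LinearMap.ker Tᵀ.mulVecLin) = m := by
      have := LinearMap.finrank_range_add_finrank_ker (Tᵀ.mulVecLin)
      simpa using this
    have h2 : Module.finrank ℝ (LinearMap.ker Tᵀ.mulVecLin) = 0 := by
      have : Tᵀ.rank = Module.finrank ℝ (LinearMap.range Tᵀ.mulVecLin) := rfl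
      omega
    have h3 : LinearMap.ker Tᵀ.mulVecLin = ⊥ := by
      rw [Submodule.finrank_eq_zero] at h2
      exact h2
    have : v ∈ LinearMap.ker Tᵀ.mulVecLin := by
      rw [LinearMap.mem_ker, mulVecLin_apply]; exact hv
    rw [h3] at this
    simpa using this
  -- Schur complement is positive definite
  have hSchur : (C * A⁻¹ * B + μ • P).PosDef := by
    refine PosDef.of_dotProduct_mulVec_pos ?_ ?_
    · rw [hCBt]
      have h1 : (Bᵀ * A⁻¹ * B).IsHermitian := by
        have := isHermitian_conjTranspose_mul_mul B hAinv.1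
        rwa [conjTranspose_eq_transpose_of_trivial] at this
      have h2 : (μ • P).IsHermitian := by
        rw [IsHermitian, conjTranspose_smul, hP.1.eq]
        simp
      exact h1.add h2
    · intro x hx
      have key : (star x) ⬝ᵥ ((C * A⁻¹ * B + μ • P) *ᵥ x) =
          (B *ᵥ x) ⬝ᵥ (A⁻¹ *ᵥ (B *ᵥ x)) + μ * (x ⬝ᵥ (P *ᵥ x)) := by
        rw [star_trivial, add_mulVec, dotProduct_add, hCBt, ← mulVec_mulVec, ← mulVec_mulVec,
          dotProduct_mulVec x, ← mulVec_transpose, transpose_transpose, smul_mulVec,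
          dotProduct_smul]
        simp
      rw [key]
      have hP2 : 0 ≤ x ⬝ᵥ (P *ᵥ x) := by simpa using hP.dotProduct_mulVec_nonneg x
      by_cases hBx : B *ᵥ x = 0
      · have hIPx : (1 - P) *ᵥ x = 0 := by
          apply hTinj
          rw [mulVec_mulVec]; exact hBx
        have hPx : P *ᵥ x = x := by
          have : (1 - P) *ᵥ x = x - P *ᵥ x := by rw [sub_mulVec, one_mulVec]
          rw [this] at hIPx
          linear_combination (norm := module) -hIPx
        have hxx : 0 < x ⬝ᵥ x := by
          rcases lt_or_eq_of_le (Finset.sum_nonneg (fun i _ => mul_self_nonneg (x i)) :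
            (0:ℝ) ≤ x ⬝ᵥ x) with h | h
          · exact h
          · exact absurd (dotProduct_self_eq_zero.mp h.symm) hx
        have h1 : (B *ᵥ x) ⬝ᵥ (A⁻¹ *ᵥ (B *ᵥ x)) = 0 := by rw [hBx]; simp
        rw [h1, hPx]
        nlinarith
      · have h1 : 0 < (B *ᵥ x) ⬝ᵥ (A⁻¹ *ᵥ (B *ᵥ x)) := by
          have := hAinv.dotProduct_mulVec_pos hBx
          rwa [star_trivial] at this
        nlinarith
  -- test matrices
  set X : Matrix (Fin n ⊕ Fin m) (Fin n) ℝ := fromRows 1 0 with hX_def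
  set Y : Matrix (Fin n ⊕ Fin m) (Fin m) ℝ := fromRows (-(A⁻¹ * B)) 1 with hY_def
  have hXMX : Xᵀ * (fromBlocks A B C D) * X = A := by
    rw [hX_def, transpose_fromRows, Matrix.mul_assoc, fromBlocks_mul_fromRows,
      fromCols_mul_fromRows]
    simp
  have hYMY : Yᵀ * (fromBlocks A B C D) * Y = -(C * A⁻¹ * B + μ • P) := by
    rw [hY_def, transpose_fromRows, Matrix.mul_assoc, fromBlocks_mul_fromRows,
      fromCols_mul_fromRows]
    have hAB : A * -(A⁻¹ * B) + B * (1 : Matrix (Fin m) (Fin m) ℝ) = 0 := by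
      rw [Matrix.mul_neg, ← Matrix.mul_assoc, Matrix.mul_nonsing_inv _ hAdet]
      simp
    rw [hAB, hD_def, Matrix.mul_zero, transpose_one, Matrix.one_mul, Matrix.mul_neg,
      Matrix.neg_mul, Matrix.mul_one, zero_add, ← Matrix.mul_assoc, neg_add]
  have hc : Fintype.card (Fin n ⊕ Fin m) = n + m := by
    rw [Fintype.card_sum, Fintype.card_fin, Fintype.card_fin]
  refine inertia_aux hc hM X Y ?_ ?_
  · rw [hXMX]; exact hA
  · rw [hYMY, neg_neg]; exact hSchur
end

section
/- With H ≻ 0, 0 ⪯ P ⪯ I symmetric, T full row rank, and μ > 0, the Schur complement −μP − (I−P)T(H + (1/μ)Tᵀ(I−P)T)^{-1}Tᵀ(I−P) is negative definite. -/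
open Matrix

/-- The Schur complement `−μP − (I−P)T(H + μ⁻¹ Tᵀ(I−P)T)⁻¹ Tᵀ(I−P)` is negative definite,
i.e. its negation `μP + (I−P)T(H + μ⁻¹ Tᵀ(I−P)T)⁻¹ Tᵀ(I−P)` is positive definite. -/
theorem schur_complement_negdef {n m : ℕ} (μ : ℝ) (hμ : 0 < μ)
    (H : Matrix (Fin n) (Fin n) ℝ) (P : Matrix (Fin m) (Fin m) ℝ)
    (T : Matrix (Fin m) (Fin n) ℝ)
    (hH : H.PosDef) (hP : P.PosSemidef) (hIP : (1 - P).PosSemidef)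
    (hT : T.rank = m) :
    Matrix.PosDef
      (μ • P + (1 - P) * T * (H + μ⁻¹ • (Tᵀ * (1 - P) * T))⁻¹ * Tᵀ * (1 - P)) := by
  classical
  set M := H + μ⁻¹ • (Tᵀ * (1 - P) * T) with hMdef
  -- Tᵀ (1-P) T is possemidef
  have hIPH : (1 - P)ᴴ = (1 - P) := hIP.isHermitian
  have hTPT : (Tᵀ * (1 - P) * T).PosSemidef := by
    have h := hIP.conjTranspose_mul_mul_same T
    simpa [conjTranspose_eq_transpose_of_trivial] using h
  have hN : (μ⁻¹ • (Tᵀ * (1 - P) * T)).PosSemidef := by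
    refine .of_dotProduct_mulVec_nonneg ?_ (fun x => ?_)
    · show _ = _
      rw [conjTranspose_smul, hTPT.isHermitian.eq]
      simp
    · rw [smul_mulVec, dotProduct_smul, smul_eq_mul]
      exact mul_nonneg (inv_nonneg.mpr hμ.le) (hTPT.dotProduct_mulVec_nonneg x)
  have hM : M.PosDef := hH.add_posSemidef hN
  have hMinv : (M⁻¹).PosDef := hM.inv
  -- rewrite the second summand as Qᴴ * M⁻¹ * Q with Q = Tᵀ * (1 - P)
  set Q : Matrix (Fin n) (Fin m) ℝ := Tᵀ * (1 - P) with hQdef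
  have hQH : Qᴴ = (1 - P) * T := by
    rw [hQdef, conjTranspose_mul, hIPH, conjTranspose_eq_transpose_of_trivial,
      transpose_transpose]
  have hrw : (1 - P) * T * M⁻¹ * Tᵀ * (1 - P) = Qᴴ * M⁻¹ * Q := by
    rw [hQH, hQdef]; exact Matrix.mul_assoc ((1 - P) * T * M⁻¹) Tᵀ (1 - P)
  rw [hrw]
  have hQMQ : (Qᴴ * M⁻¹ * Q).PosSemidef := hMinv.posSemidef.conjTranspose_mul_mul_same Q
  have hμP : (μ • P).PosSemidef := by
    refine .of_dotProduct_mulVec_nonneg ?_ (fun x => ?_)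
    · show _ = _
      rw [conjTranspose_smul, hP.isHermitian.eq]
      simp
    · rw [smul_mulVec, dotProduct_smul, smul_eq_mul]
      exact mul_nonneg hμ.le (hP.dotProduct_mulVec_nonneg x)
  -- injectivity of Tᵀ *ᵥ ·
  have hinj : ∀ x : Fin m → ℝ, x ≠ 0 → Tᵀ *ᵥ x ≠ 0 := by
    intro x hx h0
    have hker : LinearMap.ker Tᵀ.mulVecLin = ⊥ := by
      have hrn := LinearMap.finrank_range_add_finrank_ker Tᵀ.mulVecLin
      have hr : Module.finrank ℝ (LinearMap.range Tᵀ.mulVecLin) = m := by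
        have := Matrix.rank_transpose T
        rw [hT] at this
        simpa [Matrix.rank] using this
      rw [hr, Module.finrank_fin_fun] at hrn
      have : Module.finrank ℝ (LinearMap.ker Tᵀ.mulVecLin) = 0 := by omega
      exact Submodule.finrank_eq_zero.mp this
    have : x ∈ LinearMap.ker Tᵀ.mulVecLin := by
      exact LinearMap.mem_ker.mpr h0
    rw [hker] at this
    exact hx (by simpa using this)
  refine .of_dotProduct_mulVec_pos (hμP.add hQMQ).isHermitian (fun x hx => ?_)
  rw [add_mulVec, dotProduct_add]
  have key : star x ⬝ᵥ ((Qᴴ * M⁻¹ * Q) *ᵥ x) = star (Q *ᵥ x) ⬝ᵥ (M⁻¹ *ᵥ (Q *ᵥ x)) := by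
    simp only [star_mulVec, dotProduct_mulVec, vecMul_vecMul]
  have hfirst : star x ⬝ᵥ ((μ • P) *ᵥ x) = μ * (star x ⬝ᵥ (P *ᵥ x)) := by
    rw [smul_mulVec, dotProduct_smul, smul_eq_mul]
  rcases eq_or_ne (P *ᵥ x) 0 with hPx | hPx
  · have h1 : star x ⬝ᵥ ((μ • P) *ᵥ x) = 0 := by
      rw [hfirst, hPx, dotProduct_zero, mul_zero]
    have hQx : Q *ᵥ x ≠ 0 := by
      rw [hQdef, ← mulVec_mulVec, sub_mulVec, one_mulVec, hPx, sub_zero]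
      exact hinj x hx
    have h2 : 0 < star x ⬝ᵥ ((Qᴴ * M⁻¹ * Q) *ᵥ x) := by
      rw [key]; exact hMinv.dotProduct_mulVec_pos hQx
    linarith
  · have h1 : 0 < star x ⬝ᵥ ((μ • P) *ᵥ x) := by
      rw [hfirst]
      refine mul_pos hμ ?_
      rcases lt_or_eq_of_le (hP.dotProduct_mulVec_nonneg x) with h | h
      · exact h
      · exact absurd ((hP.dotProduct_mulVec_zero_iff x).mp h.symm) hPx
    have h2 : 0 ≤ star x ⬝ᵥ ((Qᴴ * M⁻¹ * Q) *ᵥ x) := hQMQ.dotProduct_mulVec_nonneg x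
    linarith
end

section
/- Let g: ℝ^m → ℝ be a proper, lower semicontinuous, convex function and μ > 0, and let prox_{μg} denote its proximal operator. Then for any a, b ∈ ℝ^m there exists a symmetric matrix D with 0 ⪯ D ⪯ I such that prox_{μg}(a) − prox_{μg}(b) = D(a − b). -/
open Matrix
open scoped InnerProductSpace


lemma aux_limit_nonneg {X C : ℝ} (hC : 0 ≤ C)
    (h : ∀ t : ℝ, 0 < t → t ≤ 1 → 0 ≤ X + t * C) : 0 ≤ X := by
  by_contra hX
  push_neg at hX
  rcases eq_or_lt_of_le hC with h0 | h0
  · have := h 1 one_pos le_rfl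
    rw [← h0] at this
    linarith
  · have ht1 : min 1 ((-X)/(2*C)) ≤ 1 := min_le_left _ _
    have htpos : 0 < min 1 ((-X)/(2*C)) :=
      lt_min one_pos (div_pos (by linarith) (by linarith))
    have h2 := h _ htpos ht1
    have htle : min 1 ((-X)/(2*C)) ≤ (-X)/(2*C) := min_le_right _ _
    have heq : (-X)/(2*C) * C = -X/2 := by field_simp
    nlinarith

/-- For a proper lsc convex `g` with proximal operator `prox`, and any `a, b`, there exists a
symmetric matrix `D` with `0 ⪯ D ⪯ I` such that `prox a − prox b = D (a − b)`. -/
theorem prox_difference_matrix {m : ℕ} (μ : ℝ) (hμ : 0 < μ)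
    (g : EuclideanSpace ℝ (Fin m) → ℝ)
    (hg : ConvexOn ℝ Set.univ g) (hlsc : LowerSemicontinuous g)
    (prox : EuclideanSpace ℝ (Fin m) → EuclideanSpace ℝ (Fin m))
    (hprox : ∀ v, IsMinOn (fun z => g z + (1 / (2 * μ)) * ‖z - v‖ ^ 2) Set.univ (prox v))
    (a b : EuclideanSpace ℝ (Fin m)) :
    ∃ D : Matrix (Fin m) (Fin m) ℝ, D.IsSymm ∧ D.PosSemidef ∧ (1 - D).PosSemidef ∧
      (prox a - prox b : Fin m → ℝ) = D.mulVec (a - b) := by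
  -- abbreviations
  set pa := prox a with hpa
  set pb := prox b with hpb
  set u : EuclideanSpace ℝ (Fin m) := pa - pb with hudef
  set w : EuclideanSpace ℝ (Fin m) := a - b with hwdef
  -- Step 1: key variational inequality for minimizers
  have key : ∀ v z : EuclideanSpace ℝ (Fin m), ∀ t : ℝ, 0 < t → t ≤ 1 →
      0 ≤ (g z - g (prox v)) + (1/μ) * ⟪prox v - v, z - prox v⟫_ℝ
        + (1/(2*μ)) * t * ‖z - prox v‖^2 := by
    intro v z t ht ht1
    set p := prox v with hp
    have h1 : g p + (1/(2*μ)) * ‖p - v‖^2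
        ≤ g (p + t • (z - p)) + (1/(2*μ)) * ‖p + t • (z - p) - v‖^2 :=
      hprox v (Set.mem_univ (p + t • (z - p)))
    have hconv : g (p + t • (z - p)) ≤ (1 - t) * g p + t * g z := by
      have := hg.2 (Set.mem_univ p) (Set.mem_univ z)
        (by linarith : (0:ℝ) ≤ 1 - t) ht.le (by ring)
      have he : (1 - t) • p + t • z = p + t • (z - p) := by
        simp [smul_sub, sub_smul]; abel
      rwa [he] at this
    have hnorm : ‖p + t • (z - p) - v‖^2
        = ‖p - v‖^2 + 2*t*⟪p - v, z - p⟫_ℝ + t^2 * ‖z - p‖^2 := by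
      have he : p + t • (z - p) - v = (p - v) + t • (z - p) := by abel
      rw [he, norm_add_sq_real, real_inner_smul_right, norm_smul]
      simp [mul_pow, sq_abs]
      ring
    have hc : 0 < 1/(2*μ) := by positivity
    have h2 : 0 ≤ t * ((g z - g p) + (1/μ) * ⟪p - v, z - p⟫_ℝ
        + (1/(2*μ)) * t * ‖z - p‖^2) := by
      have hmu : (1/μ) = 2 * (1/(2*μ)) := by field_simp
      rw [hmu]
      nlinarith [h1, hconv, hnorm]
    exact nonneg_of_mul_nonneg_right h2 ht
  -- Step 2: firm nonexpansiveness (via inner product identity and limit t → 0)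
  have hinner_id : ⟪pa - a, pb - pa⟫_ℝ + ⟪pb - b, pa - pb⟫_ℝ
      = ⟪w, u⟫_ℝ - ⟪u, u⟫_ℝ := by
    rw [hudef, hwdef]
    simp only [inner_sub_left, inner_sub_right]
    ring
  have firm : ‖u‖^2 ≤ ⟪w, u⟫_ℝ := by
    have hstep : ∀ t : ℝ, 0 < t → t ≤ 1 → 0 ≤ (⟪w, u⟫_ℝ - ‖u‖^2) + t * ‖u‖^2 := by
      intro t ht ht1
      have k1 := key a pb t ht ht1
      have k2 := key b pa t ht ht1
      have hnn : ‖pb - pa‖ = ‖pa - pb‖ := by rw [norm_sub_rev]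
      rw [hnn] at k1
      have hsum : 0 ≤ (1/μ) * (⟪pa - a, pb - pa⟫_ℝ + ⟪pb - b, pa - pb⟫_ℝ)
          + (1/μ) * t * ‖pa - pb‖^2 := by
        have : (1/μ) * t * ‖pa - pb‖^2 = 2 * ((1/(2*μ)) * t * ‖pa - pb‖^2) := by
          field_simp
        rw [this]
        linarith [k1, k2]
      rw [hinner_id] at hsum
      have hun : ⟪u, u⟫_ℝ = ‖u‖^2 := real_inner_self_eq_norm_sq u
      rw [hun] at hsum
      have hmu : 0 < 1/μ := by positivity
      have hu2 : ‖pa - pb‖^2 = ‖u‖^2 := by rw [hudef]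
      rw [hu2] at hsum
      nlinarith [hsum]
    have hC : (0:ℝ) ≤ ‖u‖^2 := sq_nonneg _
    have := aux_limit_nonneg hC hstep
    linarith
  -- coordinate form of the inner product
  have hsum_inner : ⟪w, u⟫_ℝ = ∑ i, w i * u i := by
    rw [PiLp.inner_apply]
    simp [RCLike.inner_apply]
    exact Finset.sum_congr rfl fun j _ => mul_comm _ _
  have hnorm_u : ‖u‖^2 = ∑ i, u i ^ 2 := by
    rw [← real_inner_self_eq_norm_sq, PiLp.inner_apply]
    simp [RCLike.inner_apply, sq]
  obtain ⟨T, hT⟩ : ∃ T, ⟪w, u⟫_ℝ = T := ⟨_, rfl⟩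
  rw [hT] at firm hsum_inner
  clear hT
  change ∃ D : Matrix (Fin m) (Fin m) ℝ, D.IsSymm ∧ D.PosSemidef ∧ (1 - D).PosSemidef ∧
      (WithLp.ofLp u : Fin m → ℝ) = D.mulVec (WithLp.ofLp w)
  clear_value u w
  clear hinner_id key hprox hudef hwdef hpa hpb hg hlsc
  -- case split on T
  rcases le_or_gt T 0 with hT0 | hT0
  · -- then u = 0, take D = 0
    have hu0 : ∀ i, u i = 0 := by
      have h1 : ‖u‖^2 ≤ 0 := le_trans firm hT0
      have h2 : ‖u‖ = 0 := by nlinarith [norm_nonneg u, sq_nonneg ‖u‖]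
      have h3 : u = 0 := norm_eq_zero.mp h2
      intro i; rw [h3]; rfl
    refine ⟨0, ?_, Matrix.PosSemidef.zero, ?_, ?_⟩
    · simp [Matrix.IsSymm]
    · simpa using Matrix.PosSemidef.one
    · funext i
      show u i = Matrix.mulVec 0 w i
      rw [hu0 i]
      simp [Matrix.mulVec]
  · -- main case: D = (1/T) u uᵀ
    have hTu : ∑ j, u j * w j = T := by
      rw [hsum_inner]
      exact Finset.sum_congr rfl fun j _ => mul_comm _ _
    refine ⟨Matrix.of fun i j => u i * u j / T, ?_, ?_, ?_, ?_⟩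
    · ext i j
      simp only [Matrix.transpose_apply, Matrix.of_apply]
      ring
    · rw [Matrix.posSemidef_iff_dotProduct_mulVec]; constructor
      · ext i j
        simp only [Matrix.conjTranspose_apply, Matrix.of_apply, star_trivial]
        ring
      · intro x
        have hq : dotProduct (star x) ((Matrix.of fun i j => u i * u j / T) *ᵥ x)
            = (∑ i, u i * x i)^2 / T := by
          simp only [dotProduct, Matrix.mulVec, Matrix.of_apply, star_trivial]
          rw [sq, Finset.sum_mul_sum, Finset.sum_div]
          apply Finset.sum_congr rfl; intro i _
          rw [Finset.mul_sum, Finset.sum_div]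
          apply Finset.sum_congr rfl; intro j _
          ring
        rw [hq]
        positivity
    · rw [Matrix.posSemidef_iff_dotProduct_mulVec]; constructor
      · ext i j
        simp only [Matrix.conjTranspose_apply, Matrix.sub_apply, Matrix.one_apply,
          Matrix.of_apply, star_trivial]
        by_cases hij : i = j <;> simp [hij, eq_comm] <;> ring
      · intro x
        have hform : dotProduct (star x) ((1 - Matrix.of fun i j => u i * u j / T) *ᵥ x)
            = (∑ i, x i ^ 2) - (∑ i, u i * x i)^2 / T := by
          rw [Matrix.sub_mulVec, dotProduct_sub]
          congr 1
          · simp [dotProduct, Matrix.one_mulVec, sq]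
          · simp only [dotProduct, Matrix.mulVec, Matrix.of_apply, star_trivial]
            rw [sq, Finset.sum_mul_sum, Finset.sum_div]
            apply Finset.sum_congr rfl; intro i _
            rw [Finset.mul_sum, Finset.sum_div]
            apply Finset.sum_congr rfl; intro j _
            ring
        rw [hform, sub_nonneg, div_le_iff₀ hT0]
        have hcs := Finset.sum_mul_sq_le_sq_mul_sq Finset.univ u x
        calc (∑ i, u i * x i)^2 ≤ (∑ i, u i^2) * (∑ i, x i^2) := hcs
          _ = ‖u‖^2 * (∑ i, x i^2) := by rw [hnorm_u]
          _ ≤ T * (∑ i, x i^2) := by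
              apply mul_le_mul_of_nonneg_right firm
              exact Finset.sum_nonneg fun i _ => sq_nonneg _
          _ = (∑ i, x i^2) * T := mul_comm _ _
    · funext i
      show u i = Matrix.mulVec (Matrix.of fun i j => u i * u j / T) w i
      have hr : Matrix.mulVec (Matrix.of fun i j => u i * u j / T) w i
          = u i * (∑ j, u j * w j) / T := by
        simp only [Matrix.mulVec, dotProduct, Matrix.of_apply]
        rw [Finset.mul_sum, Finset.sum_div]
        apply Finset.sum_congr rfl; intro j _
        ring
      rw [hr, hTu, mul_div_assoc, div_self (ne_of_gt hT0), mul_one]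
end

section
/- Let f: ℝ^n → ℝ be m_f-strongly convex with L_f-Lipschitz continuous gradient. Then for any a, b ∈ ℝ^n there exists a symmetric matrix G with m_f I ⪯ G ⪯ L_f I such that ∇f(a) − ∇f(b) = G(a − b). -/
open Matrix
open scoped RealInnerProductSpace

section Aux

variable {E : Type*} [NormedAddCommGroup E] [InnerProductSpace ℝ E] [CompleteSpace E]

/-- Derivative of a function with gradients along a line. -/
lemma aux_line_hasDerivAt (g : E → ℝ) (g' : E → E) (hg : ∀ z, HasGradientAt g (g' z) z)
    (x v : E) (t : ℝ) :
    HasDerivAt (fun s : ℝ => g (x + s • v)) ⟪g' (x + t • v), v⟫ t := by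
  have h1 : HasDerivAt (fun s : ℝ => x + s • v) v t := by
    simpa using ((hasDerivAt_id t).smul_const v).const_add x
  have h2 : HasFDerivAt g (InnerProductSpace.toDual ℝ E (g' (x + t • v))) (x + t • v) := hg _
  have h3 := h2.comp_hasDerivAt t h1
  simp at h3
  exact h3

/-- Convexity of the restriction to a line. -/
lemma aux_line_convex (g : E → ℝ) (hconv : ConvexOn ℝ Set.univ g) (x v : E) :
    ConvexOn ℝ Set.univ (fun t : ℝ => g (x + t • v)) := by
  refine ⟨convex_univ, fun s _ t _ α β hα hβ hαβ => ?_⟩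
  have key : x + (α • s + β • t) • v = α • (x + s • v) + β • (x + t • v) := by
    match_scalars <;> (try simp only [smul_eq_mul]) <;> linarith [hαβ]
  simp only [key]
  exact hconv.2 (Set.mem_univ _) (Set.mem_univ _) hα hβ hαβ

/-- First-order condition for convex differentiable functions. -/
lemma aux_first_order (g : E → ℝ) (g' : E → E) (hg : ∀ z, HasGradientAt g (g' z) z)
    (hconv : ConvexOn ℝ Set.univ g) (x y : E) :
    g x + ⟪g' x, y - x⟫ ≤ g y := by
  have hφ := aux_line_convex g hconv x (y - x)
  have hd := aux_line_hasDerivAt g g' hg x (y - x) 0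
  simp only [zero_smul, add_zero] at hd
  have := hφ.le_slope_of_hasDerivAt (Set.mem_univ (0:ℝ)) (Set.mem_univ (1:ℝ)) one_pos hd
  rw [slope_def_field] at this
  simp only [one_smul, zero_smul, add_zero, add_sub_cancel, sub_zero, div_one] at this
  linarith

/-- Quadratic upper bound from a one-sided Lipschitz-type bound on the gradient. -/
lemma aux_quad_upper (g : E → ℝ) (g' : E → E) (hg : ∀ z, HasGradientAt g (g' z) z)
    (L : ℝ) (hmono : ∀ x y, ⟪g' x - g' y, x - y⟫ ≤ L * ‖x - y‖ ^ 2) (x y : E) :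
    g y ≤ g x + ⟪g' x, y - x⟫ + L / 2 * ‖y - x‖ ^ 2 := by
  set v := y - x with hv
  set ψ : ℝ → ℝ := fun t => g (x + t • v) - t * ⟪g' x, v⟫ - L * t ^ 2 / 2 * ‖v‖ ^ 2 with hψ
  have hψd : ∀ t : ℝ, HasDerivAt ψ (⟪g' (x + t • v) - g' x, v⟫ - L * t * ‖v‖ ^ 2) t := by
    intro t
    have h1 := aux_line_hasDerivAt g g' hg x v t
    have h2 : HasDerivAt (fun t : ℝ => t * ⟪g' x, v⟫) ⟪g' x, v⟫ t := by
      simpa using (hasDerivAt_id t).mul_const ⟪g' x, v⟫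
    have h3 : HasDerivAt (fun t : ℝ => L * t ^ 2 / 2 * ‖v‖ ^ 2) (L * t * ‖v‖ ^ 2) t := by
      have hp : HasDerivAt (fun t : ℝ => t ^ 2) (2 * t) t := by
        simpa using hasDerivAt_pow 2 t
      have h' := ((hp.const_mul L).div_const 2).mul_const (‖v‖ ^ 2)
      have heq : L * (2 * t) / 2 * ‖v‖ ^ 2 = L * t * ‖v‖ ^ 2 := by ring
      rwa [heq] at h'
    have h4 := (h1.sub h2).sub h3
    have heq2 : ⟪g' (x + t • v), v⟫ - ⟪g' x, v⟫ - L * t * ‖v‖ ^ 2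
        = ⟪g' (x + t • v) - g' x, v⟫ - L * t * ‖v‖ ^ 2 := by rw [inner_sub_left]
    rwa [heq2] at h4
  have hanti : AntitoneOn ψ (Set.Icc (0:ℝ) 1) := by
    apply antitoneOn_of_deriv_nonpos (convex_Icc 0 1)
    · exact fun t _ => ((hψd t).continuousAt).continuousWithinAt
    · intro t _
      exact (hψd t).differentiableAt.differentiableWithinAt
    · intro t ht
      rw [interior_Icc] at ht
      rw [(hψd t).deriv]
      have key := hmono (x + t • v) x
      have h4 : (x + t • v) - x = t • v := by abel
      rw [h4, real_inner_smul_right, norm_smul] at key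
      have ht0 : 0 < t := ht.1
      have habs : |t| = t := abs_of_pos ht0
      rw [Real.norm_eq_abs, habs] at key
      have key2 : ⟪g' (x + t • v) - g' x, v⟫ ≤ L * t * ‖v‖ ^ 2 := by
        have hexp : (t * ‖v‖) ^ 2 = t * (t * ‖v‖ ^ 2) := by ring
        rw [hexp] at key
        have := (mul_le_mul_iff_right₀ ht0).mp (by linarith [key] : t * ⟪g' (x + t • v) - g' x, v⟫ ≤ t * (L * t * ‖v‖ ^ 2))
        linarith [this]
      linarith
  have h01 := hanti (Set.left_mem_Icc.mpr zero_le_one) (Set.right_mem_Icc.mpr zero_le_one) zero_le_one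
  have hψ0 : ψ 0 = g x := by simp [hψ]
  have hψ1 : ψ 1 = g y - ⟪g' x, v⟫ - L / 2 * ‖v‖ ^ 2 := by
    simp only [hψ, one_smul, one_pow, one_mul]
    have : x + v = y := by rw [hv]; abel
    rw [this]
    ring
  rw [hψ0, hψ1] at h01
  linarith

/-- The key interpolation inequality. -/
lemma aux_star (g : E → ℝ) (g' : E → E) (hg : ∀ z, HasGradientAt g (g' z) z)
    (hconv : ConvexOn ℝ Set.univ g) (L : ℝ) (hL : 0 ≤ L)
    (hmono : ∀ x y, ⟪g' x - g' y, x - y⟫ ≤ L * ‖x - y‖ ^ 2) (a b : E) :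
    ‖g' a - g' b‖ ^ 2 ≤ L * ⟪g' a - g' b, a - b⟫ := by
  -- the inner product is nonnegative by convexity
  have hs0 : 0 ≤ ⟪g' a - g' b, a - b⟫ := by
    have h1 := aux_first_order g g' hg hconv a b
    have h2 := aux_first_order g g' hg hconv b a
    have : ⟪g' a, b - a⟫ + ⟪g' b, a - b⟫ ≤ 0 := by linarith
    rw [inner_sub_left]
    have hba : (b - a : E) = -(a - b) := by abel
    rw [hba, inner_neg_right] at this
    linarith
  -- the one-sided coercivity estimate for positive Lipschitz constant
  have coco : ∀ L' : ℝ, 0 < L' →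
      (∀ x y, ⟪g' x - g' y, x - y⟫ ≤ L' * ‖x - y‖ ^ 2) →
      ∀ p q : E, g q + ⟪g' q, p - q⟫ + (2 * L')⁻¹ * ‖g' p - g' q‖ ^ 2 ≤ g p := by
    intro L' hL' hm p q
    set u := g' p - g' q with hu
    set y := p - L'⁻¹ • u with hy
    have hQ := aux_quad_upper g g' hg L' hm p y
    have hF := aux_first_order g g' hg hconv q y
    have hyp : y - p = -(L'⁻¹ • u) := by rw [hy]; abel
    have hyq : y - q = (p - q) - L'⁻¹ • u := by rw [hy]; abel
    rw [hyp] at hQ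
    rw [hyq] at hF
    rw [inner_neg_right, real_inner_smul_right] at hQ
    rw [inner_sub_right, real_inner_smul_right] at hF
    have hnn : ‖-(L'⁻¹ • u)‖ ^ 2 = L'⁻¹ ^ 2 * ‖u‖ ^ 2 := by
      rw [norm_neg, norm_smul, Real.norm_eq_abs, abs_of_pos (inv_pos.mpr hL'), mul_pow]
    rw [hnn] at hQ
    have huu : ⟪g' q, u⟫ = ⟪g' p, u⟫ - ‖u‖ ^ 2 := by
      have : ⟪g' p - g' q, u⟫ = ‖u‖ ^ 2 := by
        rw [← hu, real_inner_self_eq_norm_sq]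
      rw [inner_sub_left] at this
      linarith
    rw [huu] at hF
    have hL'inv : L'⁻¹ * L' = 1 := inv_mul_cancel₀ (ne_of_gt hL')
    have h2L : (2 * L')⁻¹ * ‖u‖ ^ 2 = L'⁻¹ * ‖u‖ ^ 2 - L' / 2 * (L'⁻¹ ^ 2 * ‖u‖ ^ 2) := by
      field_simp
      ring
    nlinarith [hQ, hF]
  -- now conclude, approximating L by L + ε
  have hmain : ∀ ε : ℝ, 0 < ε → ‖g' a - g' b‖ ^ 2 ≤ (L + ε) * ⟪g' a - g' b, a - b⟫ := by
    intro ε hε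
    have hLε : 0 < L + ε := by linarith
    have hmε : ∀ x y, ⟪g' x - g' y, x - y⟫ ≤ (L + ε) * ‖x - y‖ ^ 2 := by
      intro x y
      have := hmono x y
      nlinarith [sq_nonneg ‖x - y‖]
    have h1 := coco (L + ε) hLε hmε a b
    have h2 := coco (L + ε) hLε hmε b a
    have hswap : ‖g' b - g' a‖ ^ 2 = ‖g' a - g' b‖ ^ 2 := by
      rw [show (g' b - g' a : E) = -(g' a - g' b) by abel, norm_neg]
    rw [hswap] at h2
    have hib : ⟪g' a, b - a⟫ = -⟪g' a, a - b⟫ := by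
      rw [show (b - a : E) = -(a - b) by abel, inner_neg_right]
    rw [hib] at h2
    have hsum : ⟪g' b, a - b⟫ - ⟪g' a, a - b⟫ + 2 * (2 * (L + ε))⁻¹ * ‖g' a - g' b‖ ^ 2 ≤ 0 := by
      linarith
    have hinner : ⟪g' a - g' b, a - b⟫ = ⟪g' a, a - b⟫ - ⟪g' b, a - b⟫ := inner_sub_left _ _ _
    have h2inv : 2 * (2 * (L + ε))⁻¹ = (L + ε)⁻¹ := by
      field_simp
    rw [h2inv] at hsum
    have : (L + ε)⁻¹ * ‖g' a - g' b‖ ^ 2 ≤ ⟪g' a - g' b, a - b⟫ := by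
      rw [hinner]; linarith
    calc ‖g' a - g' b‖ ^ 2 = (L + ε) * ((L + ε)⁻¹ * ‖g' a - g' b‖ ^ 2) := by
          field_simp
      _ ≤ (L + ε) * ⟪g' a - g' b, a - b⟫ := by
          exact mul_le_mul_of_nonneg_left this (le_of_lt hLε)
  by_contra hcon
  push_neg at hcon
  set s := ⟪g' a - g' b, a - b⟫
  have hδ : 0 < (‖g' a - g' b‖ ^ 2 - L * s) / (s + 1) := by
    apply div_pos (by linarith) (by linarith)
  have := hmain _ hδ
  have hss : ((‖g' a - g' b‖ ^ 2 - L * s) / (s + 1)) * s < ‖g' a - g' b‖ ^ 2 - L * s := by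
    rw [div_mul_eq_mul_div, div_lt_iff₀ (by linarith : (0:ℝ) < s + 1)]
    nlinarith
  nlinarith [this]

end Aux

section MatrixAux

lemma aux_vecMulVec_mulVec {n : ℕ} (u v w : Fin n → ℝ) :
    (Matrix.vecMulVec u v).mulVec w = (v ⬝ᵥ w) • u := by
  funext i
  simp only [Matrix.mulVec, dotProduct, Matrix.vecMulVec_apply, Pi.smul_apply,
    smul_eq_mul, Finset.sum_mul]
  exact Finset.sum_congr rfl fun j _ => by ring

lemma aux_psd_smul_one {n : ℕ} {r : ℝ} (hr : 0 ≤ r) :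
    (r • (1 : Matrix (Fin n) (Fin n) ℝ)).PosSemidef := by
  have h : r • (1 : Matrix (Fin n) (Fin n) ℝ) = Matrix.diagonal (fun _ => r) := by
    ext i j
    by_cases hij : i = j <;>
      simp [Matrix.one_apply, Matrix.diagonal, hij]
  rw [h]
  exact Matrix.PosSemidef.diagonal (fun _ => hr)

lemma aux_matrix {n : ℕ} (mf Lf s : ℝ) (hs : 0 < s) (e' c' : Fin n → ℝ)
    (hec : e' ⬝ᵥ c' = s)
    (hCS : ∀ x : Fin n → ℝ, (e' ⬝ᵥ x) * (e' ⬝ᵥ x) ≤ ((Lf - mf) * s) * (x ⬝ᵥ x)) :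
    ∃ G : Matrix (Fin n) (Fin n) ℝ, G.IsSymm ∧ (G - mf • 1).PosSemidef ∧
      (Lf • (1 : Matrix (Fin n) (Fin n) ℝ) - G).PosSemidef ∧
      G.mulVec c' = fun i => e' i + mf * c' i := by
  have hs' : s ≠ 0 := ne_of_gt hs
  refine ⟨mf • 1 + s⁻¹ • Matrix.vecMulVec e' e', ?_, ?_, ?_, ?_⟩
  · rw [Matrix.IsSymm, Matrix.transpose_add, Matrix.transpose_smul, Matrix.transpose_one,
      Matrix.transpose_smul]
    congr 1
    congr 1
    ext i j
    simp [Matrix.vecMulVec_apply, mul_comm]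
  · rw [add_sub_cancel_left]
    refine Matrix.PosSemidef.of_dotProduct_mulVec_nonneg ?_ ?_
    · show (s⁻¹ • Matrix.vecMulVec e' e')ᴴ = _
      ext i j
      simp [Matrix.conjTranspose_apply, Matrix.vecMulVec_apply, mul_comm]
    · intro x
      rw [Matrix.smul_mulVec, aux_vecMulVec_mulVec, star_trivial,
        dotProduct_smul, dotProduct_smul, smul_eq_mul, smul_eq_mul,
        dotProduct_comm x e']
      exact mul_nonneg (inv_nonneg.mpr hs.le) (mul_self_nonneg _)
  · have hsplit : Lf • (1 : Matrix (Fin n) (Fin n) ℝ)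
        - (mf • 1 + s⁻¹ • Matrix.vecMulVec e' e')
        = (Lf - mf) • 1 - s⁻¹ • Matrix.vecMulVec e' e' := by
      rw [sub_smul]
      abel
    rw [hsplit]
    refine Matrix.PosSemidef.of_dotProduct_mulVec_nonneg ?_ ?_
    · have hh1 : ((Lf - mf) • (1 : Matrix (Fin n) (Fin n) ℝ)).IsHermitian := by
        show _ᴴ = _
        simp
      have hh2 : (s⁻¹ • Matrix.vecMulVec e' e').IsHermitian := by
        show _ᴴ = _
        ext i j
        simp [Matrix.conjTranspose_apply, Matrix.vecMulVec_apply, mul_comm]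
      exact hh1.sub hh2
    · intro x
      rw [Matrix.sub_mulVec, Matrix.smul_mulVec, Matrix.one_mulVec,
        Matrix.smul_mulVec, aux_vecMulVec_mulVec, star_trivial,
        dotProduct_sub, dotProduct_smul, dotProduct_smul,
        dotProduct_smul, smul_eq_mul, smul_eq_mul, smul_eq_mul,
        dotProduct_comm x e']
      have h1 := mul_le_mul_of_nonneg_left (hCS x) (inv_nonneg.mpr hs.le)
      have h2 : s⁻¹ * ((Lf - mf) * s * (x ⬝ᵥ x)) = (Lf - mf) * (x ⬝ᵥ x) := by
        field_simp
      rw [h2] at h1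
      linarith
  · rw [Matrix.add_mulVec, Matrix.smul_mulVec, Matrix.one_mulVec,
      Matrix.smul_mulVec, aux_vecMulVec_mulVec, hec]
    funext i
    simp only [Pi.add_apply, Pi.smul_apply, smul_eq_mul]
    field_simp
    ring

end MatrixAux

/-- For `f` strongly convex with parameter `m_f` and `L_f`-Lipschitz gradient `f'`, for any
`a, b` there exists a symmetric matrix `G` with `m_f I ⪯ G ⪯ L_f I` such that
`f' a − f' b = G (a − b)`. -/
theorem grad_difference_matrix {n : ℕ} (mf Lf : ℝ) (hmf : 0 < mf) (hLf : mf ≤ Lf)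
    (f : EuclideanSpace ℝ (Fin n) → ℝ)
    (f' : EuclideanSpace ℝ (Fin n) → EuclideanSpace ℝ (Fin n))
    (hf' : ∀ x, HasGradientAt f (f' x) x)
    (hsc : ConvexOn ℝ Set.univ (fun x => f x - mf / 2 * ‖x‖ ^ 2))
    (hlip : ∀ a b, ‖f' a - f' b‖ ≤ Lf * ‖a - b‖)
    (a b : EuclideanSpace ℝ (Fin n)) :
    ∃ G : Matrix (Fin n) (Fin n) ℝ, G.IsSymm ∧ (G - mf • 1).PosSemidef ∧
      (Lf • (1 : Matrix (Fin n) (Fin n) ℝ) - G).PosSemidef ∧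
      (f' a - f' b : Fin n → ℝ) = G.mulVec (a - b) := by
  classical
  set g : EuclideanSpace ℝ (Fin n) → ℝ := fun x => f x - mf / 2 * ‖x‖ ^ 2 with hgdef
  set g' : EuclideanSpace ℝ (Fin n) → EuclideanSpace ℝ (Fin n) :=
    fun x => f' x - mf • x with hg'def
  -- gradient of g
  have hg : ∀ z, HasGradientAt g (g' z) z := by
    intro z
    rw [hasGradientAt_iff_hasFDerivAt]
    have hquad : HasFDerivAt (fun y : EuclideanSpace ℝ (Fin n) => mf / 2 * ‖y‖ ^ 2)
        (InnerProductSpace.toDual ℝ (EuclideanSpace ℝ (Fin n)) (mf • z)) z := by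
      have hin : HasFDerivAt (fun y : EuclideanSpace ℝ (Fin n) => ⟪y, y⟫)
          ((fderivInnerCLM ℝ ((id z : EuclideanSpace ℝ (Fin n)),
              (id z : EuclideanSpace ℝ (Fin n)))).comp
            ((ContinuousLinearMap.id ℝ (EuclideanSpace ℝ (Fin n))).prod
              (ContinuousLinearMap.id ℝ (EuclideanSpace ℝ (Fin n))))) z :=
        (hasFDerivAt_id z).inner ℝ (hasFDerivAt_id z)
      have hfun : (fun y : EuclideanSpace ℝ (Fin n) => mf / 2 * ‖y‖ ^ 2)
          = fun y : EuclideanSpace ℝ (Fin n) => mf / 2 * ⟪y, y⟫ := by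
        funext y
        rw [real_inner_self_eq_norm_sq]
      rw [hfun]
      have := hin.const_mul (mf / 2)
      convert this using 1
      all_goals try rfl
      apply ContinuousLinearMap.ext
      intro v
      simp only [ContinuousLinearMap.smul_apply, ContinuousLinearMap.comp_apply,
        ContinuousLinearMap.prod_apply, ContinuousLinearMap.id_apply,
        fderivInnerCLM_apply, InnerProductSpace.toDual_apply_apply, id]
      rw [real_inner_smul_left, real_inner_comm, smul_eq_mul]
      ring
    have hf'' : HasFDerivAt f (InnerProductSpace.toDual ℝ (EuclideanSpace ℝ (Fin n)) (f' z)) z :=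
      hasGradientAt_iff_hasFDerivAt.mp (hf' z)
    have := hf''.sub hquad
    rw [← map_sub] at this
    exact this
  -- one-sided Lipschitz bound for the gradient of g
  have hmono : ∀ x y : EuclideanSpace ℝ (Fin n),
      ⟪g' x - g' y, x - y⟫ ≤ (Lf - mf) * ‖x - y‖ ^ 2 := by
    intro x y
    have h1 : g' x - g' y = (f' x - f' y) - mf • (x - y) := by
      simp only [hg'def, smul_sub]
      abel
    rw [h1, inner_sub_left, real_inner_smul_left, real_inner_self_eq_norm_sq]
    have h2 : ⟪f' x - f' y, x - y⟫ ≤ ‖f' x - f' y‖ * ‖x - y‖ := real_inner_le_norm _ _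
    have h3 := hlip x y
    nlinarith [h2, mul_le_mul_of_nonneg_right h3 (norm_nonneg (x - y)), sq_nonneg ‖x - y‖,
      norm_nonneg (x - y)]
  have hstar := aux_star g g' hg hsc (Lf - mf) (by linarith) hmono a b
  set e : EuclideanSpace ℝ (Fin n) := g' a - g' b with hedef
  set c : EuclideanSpace ℝ (Fin n) := a - b with hcdef
  have hept : ∀ i, (e : Fin n → ℝ) i = f' a i - f' b i - mf * (a i - b i) := by
    intro i
    simp [hedef, hg'def, mul_sub]
    ring
  have hcpt : ∀ i, (c : Fin n → ℝ) i = a i - b i := fun i => rfl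
  by_cases he : e = 0
  · refine ⟨mf • 1, ?_, ?_, ?_, ?_⟩
    · rw [Matrix.IsSymm, Matrix.transpose_smul, Matrix.transpose_one]
    · rw [sub_self]
      exact ⟨by simp [Matrix.IsHermitian], fun x => by simp⟩
    · have : Lf • (1 : Matrix (Fin n) (Fin n) ℝ) - mf • 1 = (Lf - mf) • 1 := by
        rw [sub_smul]
      rw [this]
      exact aux_psd_smul_one (by linarith)
    · funext i
      have hei : (e : Fin n → ℝ) i = 0 := by rw [he]; rfl
      rw [hept i] at hei
      have hmv : ((mf • (1 : Matrix (Fin n) (Fin n) ℝ)) *ᵥ (c : Fin n → ℝ)) i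
          = mf * ((c : Fin n → ℝ) i) := by
        rw [Matrix.smul_mulVec, Matrix.one_mulVec]
        rfl
      show ((f' a).ofLp - (f' b).ofLp) i = ((mf • (1 : Matrix (Fin n) (Fin n) ℝ)) *ᵥ (c : Fin n → ℝ)) i
      rw [hmv, hcpt i]
      show f' a i - f' b i = mf * (a i - b i)
      linarith
  · -- nondegenerate case
    set s : ℝ := ⟪e, c⟫ with hsdef
    have hepos : 0 < ‖e‖ ^ 2 := by
      have := norm_pos_iff.mpr he
      positivity
    have hLm : (0 : ℝ) < Lf - mf := by
      rcases lt_or_eq_of_le (by linarith : (0:ℝ) ≤ Lf - mf) with h | h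
      · exact h
      · exfalso; rw [← h, zero_mul] at hstar; linarith
    have hs : 0 < s := by
      by_contra hns
      push_neg at hns
      nlinarith
    -- move to plain vectors
    set e' : Fin n → ℝ := fun i => f' a i - f' b i - mf * (a i - b i) with he'def
    set c' : Fin n → ℝ := fun i => a i - b i with hc'def
    have hee' : (fun i => (e : Fin n → ℝ) i) = e' := funext fun i => hept i
    have hcc' : (fun i => (c : Fin n → ℝ) i) = c' := funext fun i => hcpt i
    have dotin : ∀ x y : EuclideanSpace ℝ (Fin n),
        (fun i => (x : Fin n → ℝ) i) ⬝ᵥ (fun i => (y : Fin n → ℝ) i) = ⟪x, y⟫ := by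
      intro x y
      simp [dotProduct, PiLp.inner_apply, RCLike.inner_apply, mul_comm]
    have hec : e' ⬝ᵥ c' = s := by
      rw [← hee', ← hcc', dotin]
    have hCS : ∀ x : Fin n → ℝ, (e' ⬝ᵥ x) * (e' ⬝ᵥ x) ≤ ((Lf - mf) * s) * (x ⬝ᵥ x) := by
      intro x
      set xE : EuclideanSpace ℝ (Fin n) := (WithLp.equiv 2 (Fin n → ℝ)).symm x with hxE
      have hx1 : e' ⬝ᵥ x = ⟪e, xE⟫ := by
        rw [← hee', ← dotin e xE]
        congr 1
      have hx2 : x ⬝ᵥ x = ⟪xE, xE⟫ := by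
        rw [← dotin xE xE]
        congr 1
      have hcs := real_inner_mul_inner_self_le e xE
      have hee : ⟪e, e⟫ = ‖e‖ ^ 2 := real_inner_self_eq_norm_sq e
      have hxx : (0:ℝ) ≤ ⟪xE, xE⟫ := real_inner_self_nonneg
      rw [hx1, hx2]
      nlinarith [hcs, hstar, hxx]
    obtain ⟨G, hG1, hG2, hG3, hG4⟩ := aux_matrix mf Lf s hs e' c' hec hCS
    refine ⟨G, hG1, hG2, hG3, ?_⟩
    have hcvec : (c : Fin n → ℝ) = c' := funext fun j => hcpt j
    have hcmul : G.mulVec (c : Fin n → ℝ) = G.mulVec c' := congrArg _ hcvec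
    funext i
    have h2 : (G.mulVec (c : Fin n → ℝ)) i = e' i + mf * c' i := by
      rw [hcmul, hG4]
    show f' a i - f' b i = (G.mulVec (c : Fin n → ℝ)) i
    rw [h2]
    simp only [he'def, hc'def]
    ring
end

section
/- Let f be twice continuously differentiable and convex, g proper lsc convex, μ > 0. The proximal augmented Lagrangian L_μ(x;y) = f(x) + M_{μg}(Tx + μy) − (μ/2)‖y‖² is continuously differentiable with ∇_x L_μ = ∇f(x) + Tᵀ∇M_{μg}(Tx + μy) and ∇_y L_μ = μ∇M_{μg}(Tx + μy) − μy, and ∇L_μ is Lipschitz continuous whenever ∇f is Lipschitz. -/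
open Matrix
/-- Matrix–vector multiplication, viewed as a map between Euclidean spaces. -/
noncomputable def mulVecE {n m : ℕ} (T : Matrix (Fin m) (Fin n) ℝ)
    (x : EuclideanSpace ℝ (Fin n)) : EuclideanSpace ℝ (Fin m) :=
  WithLp.toLp 2 (T.mulVec x)

/-- The Moreau envelope `M_{μg}(v) = g (prox v) + (1/(2μ))‖prox v − v‖²` expressed
through the proximal operator. -/
noncomputable def MoreauEnv {m : ℕ} (μ : ℝ) (g : EuclideanSpace ℝ (Fin m) → ℝ)
    (prox : EuclideanSpace ℝ (Fin m) → EuclideanSpace ℝ (Fin m))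
    (v : EuclideanSpace ℝ (Fin m)) : ℝ :=
  g (prox v) + (1 / (2 * μ)) * ‖prox v - v‖ ^ 2

/-- The gradient `∇M_{μg}(v) = (1/μ)(v − prox v)` of the Moreau envelope. -/
noncomputable def gradMoreau {m : ℕ} (μ : ℝ)
    (prox : EuclideanSpace ℝ (Fin m) → EuclideanSpace ℝ (Fin m))
    (v : EuclideanSpace ℝ (Fin m)) : EuclideanSpace ℝ (Fin m) :=
  (1 / μ) • (v - prox v)


open Matrix InnerProductSpace Topology

section AuxMoreau

variable {E : Type*} [NormedAddCommGroup E] [InnerProductSpace ℝ E]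

local notation "⟪" x ", " y "⟫" => @inner ℝ _ _ x y

lemma hasGradientAt_of_quad [CompleteSpace E] (φ : E → ℝ) (G v : E) (C : ℝ)
    (h : ∀ w, |φ w - φ v - ⟪G, w - v⟫| ≤ C * ‖w - v‖ ^ 2) :
    HasGradientAt φ G v := by
  rw [hasGradientAt_iff_hasFDerivAt, hasFDerivAt_iff_isLittleO_nhds_zero]
  rw [Asymptotics.isLittleO_iff]
  intro ε hε
  have hC1 : (0:ℝ) < |C| + 1 := by positivity
  have hmem : Metric.ball (0 : E) (ε / (|C| + 1)) ∈ 𝓝 (0 : E) :=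
    Metric.ball_mem_nhds _ (by positivity)
  filter_upwards [hmem] with z hz
  have hz' : ‖z‖ < ε / (|C| + 1) := by simpa using hz
  have h2 := h (v + z)
  simp only [add_sub_cancel_left] at h2
  have : ‖φ (v + z) - φ v - (toDual ℝ E G) z‖ ≤ C * ‖z‖ ^ 2 := by
    simpa [toDual_apply_apply, Real.norm_eq_abs] using h2
  calc ‖φ (v + z) - φ v - (toDual ℝ E G) z‖ ≤ C * ‖z‖ ^ 2 := this
    _ ≤ (|C| + 1) * ‖z‖ * ‖z‖ := by
        have : C * ‖z‖^2 ≤ (|C|+1) * ‖z‖^2 := by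
          apply mul_le_mul_of_nonneg_right (by cases abs_cases C <;> linarith) (by positivity)
        nlinarith [norm_nonneg z]
    _ ≤ ε * ‖z‖ := by
        rcases eq_or_lt_of_le (norm_nonneg z) with h0 | h0
        · simp [← h0]
        · have h3 : (|C|+1) * ‖z‖ ≤ ε := by
            have := (lt_div_iff₀ hC1).mp hz'
            nlinarith
          nlinarith

variable {μ : ℝ} {g : E → ℝ} {prox : E → E}

lemma moreau_subgrad (hμ : 0 < μ) (hg : ConvexOn ℝ Set.univ g)
    (hprox : ∀ v, IsMinOn (fun z => g z + (1 / (2 * μ)) * ‖z - v‖ ^ 2) Set.univ (prox v))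
    (v z : E) : ⟪v - prox v, z - prox v⟫ ≤ μ * (g z - g (prox v)) := by
  set p := prox v with hp
  set c := 1 / (2 * μ) with hc
  have hcpos : 0 < c := by rw [hc]; positivity
  set K := c * ‖z - p‖ ^ 2 with hK
  have hK0 : 0 ≤ K := by positivity
  have key : ∀ t : ℝ, 0 < t → t ≤ 1 →
      μ * (g p - g z) + ⟪v - p, z - p⟫ ≤ t * (μ * K) := by
    intro t ht ht1
    have hmin := (hprox v) (Set.mem_univ ((1 - t) • p + t • z))
    simp only [Set.mem_univ, forall_true_left] at hmin
    have hconv := hg.2 (Set.mem_univ p) (Set.mem_univ z) (by linarith : (0:ℝ) ≤ 1 - t)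
      (le_of_lt ht) (by ring)
    have hnorm : ‖((1 - t) • p + t • z) - v‖ ^ 2
        = ‖p - v‖ ^ 2 + 2 * t * ⟪p - v, z - p⟫ + t ^ 2 * ‖z - p‖ ^ 2 := by
      have : ((1 - t) • p + t • z) - v = (p - v) + t • (z - p) := by
        module
      rw [this, norm_add_sq_real, real_inner_smul_right, norm_smul]
      simp [mul_pow, Real.norm_eq_abs, sq_abs]
      ring
    have hmin' : g p + c * ‖p - v‖ ^ 2 ≤
        ((1 - t) * g p + t * g z) + c * (‖p - v‖ ^ 2 + 2 * t * ⟪p - v, z - p⟫ + t ^ 2 * ‖z - p‖ ^ 2) := by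
      calc g p + c * ‖p - v‖ ^ 2 ≤ g ((1 - t) • p + t • z) + c * ‖((1 - t) • p + t • z) - v‖ ^ 2 := hmin
        _ ≤ _ := by rw [hnorm]; exact add_le_add hconv le_rfl
    have h2 : t * (g p - g z) ≤ 2 * t * c * ⟪p - v, z - p⟫ + t ^ 2 * K := by
      rw [hK]; nlinarith [hmin']
    have hμc : 2 * c * μ = 1 := by rw [hc]; field_simp
    have hinner : ⟪v - p, z - p⟫ = - ⟪p - v, z - p⟫ := by
      rw [← inner_neg_left]; congr 1; abel
    have h3 : g p - g z ≤ 2 * c * ⟪p - v, z - p⟫ + t * K := by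
      have := mul_le_mul_of_nonneg_left h2 (le_of_lt (inv_pos.mpr ht))
      rw [mul_comm] at this
      field_simp at this
      nlinarith [h2, ht]
    have h4 : μ * (g p - g z) ≤ ⟪p - v, z - p⟫ + t * (μ * K) := by
      calc μ * (g p - g z) ≤ μ * (2 * c * ⟪p - v, z - p⟫ + t * K) :=
            mul_le_mul_of_nonneg_left h3 (le_of_lt hμ)
        _ = (2 * c * μ) * ⟪p - v, z - p⟫ + t * (μ * K) := by ring
        _ = ⟪p - v, z - p⟫ + t * (μ * K) := by rw [hμc]; ring
    rw [hinner]
    linarith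
  have : μ * (g p - g z) + ⟪v - p, z - p⟫ ≤ 0 := by
    apply le_of_forall_pos_le_add
    intro ε hε
    have hμK1 : 0 < μ * K + 1 := by positivity
    set t := min 1 (ε / (μ * K + 1)) with htdef
    have ht0 : 0 < t := lt_min one_pos (by positivity)
    have ht1 : t ≤ 1 := min_le_left _ _
    have := key t ht0 ht1
    have htK : t * (μ * K) ≤ ε := by
      have h5 : t ≤ ε / (μ * K + 1) := min_le_right _ _
      have h6 : t * (μ * K + 1) ≤ ε := by
        rw [← le_div_iff₀ hμK1] at *; linarith
      nlinarith [mul_nonneg (le_of_lt ht0) hK0, ht0]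
    linarith
  nlinarith [this]

lemma moreau_firm (hμ : 0 < μ) (hg : ConvexOn ℝ Set.univ g)
    (hprox : ∀ v, IsMinOn (fun z => g z + (1 / (2 * μ)) * ‖z - v‖ ^ 2) Set.univ (prox v))
    (v w : E) : ‖prox w - prox v‖ ^ 2 ≤ ⟪prox w - prox v, w - v⟫ := by
  have h1 := moreau_subgrad hμ hg hprox v (prox w)
  have h2 := moreau_subgrad hμ hg hprox w (prox v)
  have e1 : ⟪prox w - prox v, w - v⟫ - ‖prox w - prox v‖ ^ 2
      = - (⟪v - prox v, prox w - prox v⟫ + ⟪w - prox w, prox v - prox w⟫) := by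
    rw [← @real_inner_self_eq_norm_sq]
    simp only [inner_sub_left, inner_sub_right]
    rw [real_inner_comm (prox w) (prox v)]
    ring_nf
    rw [real_inner_comm v (prox w), real_inner_comm w (prox v),
        real_inner_comm v (prox v), real_inner_comm w (prox w)]
    ring
  nlinarith [h1, h2, e1]

lemma moreau_env_upper (hμ : 0 < μ)
    (hprox : ∀ v, IsMinOn (fun z => g z + (1 / (2 * μ)) * ‖z - v‖ ^ 2) Set.univ (prox v))
    (v w : E) :
    g (prox w) + (1 / (2 * μ)) * ‖prox w - w‖ ^ 2 ≤
      (g (prox v) + (1 / (2 * μ)) * ‖prox v - v‖ ^ 2) +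
        (1 / μ) * ⟪v - prox v, w - v⟫ + (1 / (2 * μ)) * ‖w - v‖ ^ 2 := by
  have hmin := (hprox w) (Set.mem_univ (prox v))
  simp only [Set.mem_univ, forall_true_left] at hmin
  have hexp : ‖prox v - w‖ ^ 2 = ‖prox v - v‖ ^ 2 + 2 * ⟪prox v - v, v - w⟫ + ‖w - v‖ ^ 2 := by
    have h1 : prox v - w = (prox v - v) + (v - w) := by abel
    rw [h1, norm_add_sq_real, norm_sub_rev v w]
  have hinner : ⟪v - prox v, w - v⟫ = ⟪prox v - v, v - w⟫ := by
    rw [show v - prox v = -(prox v - v) by abel, show w - v = -(v - w) by abel,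
      inner_neg_neg]
  have hc : (1:ℝ) / μ = 2 * (1 / (2 * μ)) := by field_simp
  calc g (prox w) + (1 / (2 * μ)) * ‖prox w - w‖ ^ 2
      ≤ g (prox v) + (1 / (2 * μ)) * ‖prox v - w‖ ^ 2 := hmin
    _ = _ := by rw [hexp, hinner, hc]; ring

lemma moreau_sandwich (hμ : 0 < μ) (hg : ConvexOn ℝ Set.univ g)
    (hprox : ∀ v, IsMinOn (fun z => g z + (1 / (2 * μ)) * ‖z - v‖ ^ 2) Set.univ (prox v))
    (v w : E) :
    |(g (prox w) + (1 / (2 * μ)) * ‖prox w - w‖ ^ 2) -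
      (g (prox v) + (1 / (2 * μ)) * ‖prox v - v‖ ^ 2) -
      ⟪(1 / μ) • (v - prox v), w - v⟫| ≤ (1 / (2 * μ)) * ‖w - v‖ ^ 2 := by
  have hsm : ⟪(1 / μ) • (v - prox v), w - v⟫ = (1 / μ) * ⟪v - prox v, w - v⟫ :=
    real_inner_smul_left _ _ _
  have hup := moreau_env_upper hμ hprox v w
  have hlo := moreau_env_upper hμ hprox w v
  have hfirm := moreau_firm hμ hg hprox v w
  have hcs := real_inner_le_norm (prox w - prox v) (w - v)
  have hd : ⟪prox w - prox v, w - v⟫ ≤ ‖w - v‖ ^ 2 := by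
    nlinarith [norm_nonneg (prox w - prox v), norm_nonneg (w - v)]
  have hBA : ⟪w - prox w, w - v⟫ - ⟪v - prox v, w - v⟫
      = ‖w - v‖ ^ 2 - ⟪prox w - prox v, w - v⟫ := by
    rw [← @real_inner_self_eq_norm_sq]
    simp only [inner_sub_left]
    ring
  have hlo' : ⟪w - prox w, v - w⟫ = - ⟪w - prox w, w - v⟫ := by
    rw [show v - w = -(w - v) by abel, inner_neg_right]
  rw [norm_sub_rev v w] at hlo
  have hμ0 : 0 < 1 / μ := by positivity
  rw [hsm, abs_le]
  constructor
  · nlinarith [hlo, hd, hBA, hlo', mul_le_mul_of_nonneg_left hd (le_of_lt hμ0)]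
  · linarith [hup]

lemma moreau_grad_lip (hμ : 0 < μ) (hg : ConvexOn ℝ Set.univ g)
    (hprox : ∀ v, IsMinOn (fun z => g z + (1 / (2 * μ)) * ‖z - v‖ ^ 2) Set.univ (prox v))
    (v w : E) :
    ‖(1 / μ) • (w - prox w) - (1 / μ) • (v - prox v)‖ ≤ (1 / μ) * ‖w - v‖ := by
  have hfirm := moreau_firm hμ hg hprox v w
  set d := (w - prox w) - (v - prox v) with hdd
  have hd2 : ‖d‖ ^ 2 ≤ ‖w - v‖ ^ 2 := by
    have h1 : d = (w - v) - (prox w - prox v) := by rw [hdd]; abel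
    have hfirm' : ‖prox w - prox v‖ ^ 2 ≤ ⟪w - v, prox w - prox v⟫ := by
      rwa [real_inner_comm]
    rw [h1, norm_sub_sq_real]
    nlinarith [sq_nonneg ‖prox w - prox v‖]
  have hdn : ‖d‖ ≤ ‖w - v‖ := by
    nlinarith [norm_nonneg d, norm_nonneg (w - v)]
  have hμ0 : 0 < 1 / μ := by positivity
  calc ‖(1 / μ) • (w - prox w) - (1 / μ) • (v - prox v)‖ = ‖(1 / μ) • d‖ := by
        rw [← smul_sub]
    _ = (1 / μ) * ‖d‖ := by rw [norm_smul, Real.norm_eq_abs, abs_of_pos hμ0]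
    _ ≤ (1 / μ) * ‖w - v‖ := by nlinarith

end AuxMoreau
section AuxMatrix

open Matrix

noncomputable def mulVecCLM {n m : ℕ} (T : Matrix (Fin m) (Fin n) ℝ) :
    EuclideanSpace ℝ (Fin n) →L[ℝ] EuclideanSpace ℝ (Fin m) :=
  LinearMap.toContinuousLinearMap
    { toFun := mulVecE T
      map_add' := fun x y => by
        ext i
        simp [mulVecE, Matrix.mulVec, dotProduct, PiLp.add_apply,
          mul_add, Finset.sum_add_distrib]
      map_smul' := fun c x => by
        ext i
        simp [mulVecE, Matrix.mulVec, dotProduct, PiLp.smul_apply,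
          Finset.mul_sum, smul_eq_mul]
        apply Finset.sum_congr rfl; intro j _; ring }

lemma mulVecCLM_apply {n m : ℕ} (T : Matrix (Fin m) (Fin n) ℝ) (x : EuclideanSpace ℝ (Fin n)) :
    mulVecCLM T x = mulVecE T x := rfl

lemma mulVecE_sub {n m : ℕ} (T : Matrix (Fin m) (Fin n) ℝ) (x y : EuclideanSpace ℝ (Fin n)) :
    mulVecE T x - mulVecE T y = mulVecE T (x - y) := by
  rw [← mulVecCLM_apply, ← mulVecCLM_apply, ← mulVecCLM_apply, ← map_sub]

lemma mulVecE_norm_le {n m : ℕ} (T : Matrix (Fin m) (Fin n) ℝ) (x : EuclideanSpace ℝ (Fin n)) :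
    ‖mulVecE T x‖ ≤ ‖mulVecCLM T‖ * ‖x‖ := by
  rw [← mulVecCLM_apply]; exact (mulVecCLM T).le_opNorm x

lemma mulVecE_adjoint {n m : ℕ} (T : Matrix (Fin m) (Fin n) ℝ)
    (u : EuclideanSpace ℝ (Fin m)) (h : EuclideanSpace ℝ (Fin n)) :
    (inner ℝ (mulVecE Tᵀ u) h : ℝ) = inner ℝ u (mulVecE T h) := by
  simp only [PiLp.inner_apply, RCLike.inner_apply, conj_trivial, mulVecE,
    Matrix.mulVec, dotProduct, Matrix.transpose_apply]
  simp_rw [Finset.sum_mul, Finset.mul_sum]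
  rw [Finset.sum_comm]
  apply Finset.sum_congr rfl; intro i _
  apply Finset.sum_congr rfl; intro j _
  ring

end AuxMatrix

set_option maxHeartbeats 1000000 in
/-- The proximal augmented Lagrangian `L_μ(x;y) = f(x) + M_{μg}(Tx + μy) − (μ/2)‖y‖²` is
continuously differentiable with `∇ₓL_μ = ∇f(x) + Tᵀ∇M_{μg}(Tx + μy)` and
`∇_y L_μ = μ∇M_{μg}(Tx + μy) − μy`, and its gradient is Lipschitz whenever `∇f` is. -/
theorem proximal_augmented_lagrangian_differentiable {n m : ℕ} (μ : ℝ) (hμ : 0 < μ)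
    (f : EuclideanSpace ℝ (Fin n) → ℝ)
    (f' : EuclideanSpace ℝ (Fin n) → EuclideanSpace ℝ (Fin n))
    (hf : ContDiff ℝ 2 f) (hfc : ConvexOn ℝ Set.univ f)
    (hf' : ∀ x, HasGradientAt f (f' x) x)
    (g : EuclideanSpace ℝ (Fin m) → ℝ)
    (hg : ConvexOn ℝ Set.univ g) (hlsc : LowerSemicontinuous g)
    (T : Matrix (Fin m) (Fin n) ℝ)
    (prox : EuclideanSpace ℝ (Fin m) → EuclideanSpace ℝ (Fin m))
    (hprox : ∀ v, IsMinOn (fun z => g z + (1 / (2 * μ)) * ‖z - v‖ ^ 2) Set.univ (prox v)) :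
    (∀ (x : EuclideanSpace ℝ (Fin n)) (y : EuclideanSpace ℝ (Fin m)),
      HasGradientAt
        (fun x' => f x' + MoreauEnv μ g prox (mulVecE T x' + μ • y) - (μ / 2) * ‖y‖ ^ 2)
        (f' x + mulVecE Tᵀ (gradMoreau μ prox (mulVecE T x + μ • y))) x) ∧
    (∀ (x : EuclideanSpace ℝ (Fin n)) (y : EuclideanSpace ℝ (Fin m)),
      HasGradientAt
        (fun y' => f x + MoreauEnv μ g prox (mulVecE T x + μ • y') - (μ / 2) * ‖y'‖ ^ 2)
        (μ • gradMoreau μ prox (mulVecE T x + μ • y) - μ • y) y) ∧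
    (Continuous (fun p : EuclideanSpace ℝ (Fin n) × EuclideanSpace ℝ (Fin m) =>
      f' p.1 + mulVecE Tᵀ (gradMoreau μ prox (mulVecE T p.1 + μ • p.2)))) ∧
    (Continuous (fun p : EuclideanSpace ℝ (Fin n) × EuclideanSpace ℝ (Fin m) =>
      μ • gradMoreau μ prox (mulVecE T p.1 + μ • p.2) - μ • p.2)) ∧
    (∀ Lf : ℝ, (∀ a b, ‖f' a - f' b‖ ≤ Lf * ‖a - b‖) →
      ∃ K : ℝ, 0 ≤ K ∧
        ∀ (x₁ x₂ : EuclideanSpace ℝ (Fin n)) (y₁ y₂ : EuclideanSpace ℝ (Fin m)),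
          ‖(f' x₁ + mulVecE Tᵀ (gradMoreau μ prox (mulVecE T x₁ + μ • y₁))) -
            (f' x₂ + mulVecE Tᵀ (gradMoreau μ prox (mulVecE T x₂ + μ • y₂)))‖ +
          ‖(μ • gradMoreau μ prox (mulVecE T x₁ + μ • y₁) - μ • y₁) -
            (μ • gradMoreau μ prox (mulVecE T x₂ + μ • y₂) - μ • y₂)‖ ≤
          K * (‖x₁ - x₂‖ + ‖y₁ - y₂‖)) := by
  have hμ' : (0:ℝ) < 1 / μ := by positivity
  -- Lipschitz property of gradMoreau
  have hgm_lip : ∀ v w : EuclideanSpace ℝ (Fin m),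
      ‖gradMoreau μ prox w - gradMoreau μ prox v‖ ≤ (1 / μ) * ‖w - v‖ := by
    intro v w
    simpa [gradMoreau] using moreau_grad_lip hμ hg hprox v w
  have hgm_cont : Continuous (gradMoreau μ prox) := by
    apply LipschitzWith.continuous (K := ⟨1 / μ, le_of_lt hμ'⟩)
    apply LipschitzWith.of_dist_le_mul
    intro a b
    rw [dist_eq_norm, dist_eq_norm]
    exact hgm_lip b a
  -- continuity of f'
  have hf'cont : Continuous f' := by
    have h1 : Continuous (fderiv ℝ f) := hf.continuous_fderiv two_ne_zero
    have h2 : ∀ x, f' x = (toDual ℝ (EuclideanSpace ℝ (Fin n))).symm (fderiv ℝ f x) := by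
      intro x
      have h3 : fderiv ℝ f x = toDual ℝ (EuclideanSpace ℝ (Fin n)) (f' x) :=
        (hf' x).hasFDerivAt.fderiv
      rw [h3, LinearIsometryEquiv.symm_apply_apply]
    have h4 : Continuous fun x =>
        (toDual ℝ (EuclideanSpace ℝ (Fin n))).symm (fderiv ℝ f x) :=
      (toDual ℝ (EuclideanSpace ℝ (Fin n))).symm.continuous.comp h1
    exact (funext h2 : f' = _) ▸ h4
  -- part 1
  have main1 : ∀ (x : EuclideanSpace ℝ (Fin n)) (y : EuclideanSpace ℝ (Fin m)),
      HasGradientAt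
        (fun x' => f x' + MoreauEnv μ g prox (mulVecE T x' + μ • y) - (μ / 2) * ‖y‖ ^ 2)
        (f' x + mulVecE Tᵀ (gradMoreau μ prox (mulVecE T x + μ • y))) x := by
    intro x y
    have hΦ : HasGradientAt (fun x' => MoreauEnv μ g prox (mulVecE T x' + μ • y))
        (mulVecE Tᵀ (gradMoreau μ prox (mulVecE T x + μ • y))) x := by
      apply hasGradientAt_of_quad _ _ _ ((1 / (2 * μ)) * ‖mulVecCLM T‖ ^ 2)
      intro w
      have hkey := moreau_sandwich hμ hg hprox (mulVecE T x + μ • y) (mulVecE T w + μ • y)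
      have hdiff : (mulVecE T w + μ • y) - (mulVecE T x + μ • y) = mulVecE T (w - x) := by
        rw [← mulVecE_sub]; abel
      rw [hdiff] at hkey
      have hadj : (inner ℝ (mulVecE Tᵀ (gradMoreau μ prox (mulVecE T x + μ • y))) (w - x) : ℝ)
          = inner ℝ (gradMoreau μ prox (mulVecE T x + μ • y)) (mulVecE T (w - x)) :=
        mulVecE_adjoint T _ _
      have hb1 : ‖mulVecE T (w - x)‖ ^ 2 ≤ (‖mulVecCLM T‖ * ‖w - x‖) ^ 2 :=
        pow_le_pow_left₀ (norm_nonneg _) (mulVecE_norm_le T _) 2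
      calc |MoreauEnv μ g prox (mulVecE T w + μ • y) -
            MoreauEnv μ g prox (mulVecE T x + μ • y) -
            inner ℝ (mulVecE Tᵀ (gradMoreau μ prox (mulVecE T x + μ • y))) (w - x)|
          = |MoreauEnv μ g prox (mulVecE T w + μ • y) -
            MoreauEnv μ g prox (mulVecE T x + μ • y) -
            inner ℝ (gradMoreau μ prox (mulVecE T x + μ • y)) (mulVecE T (w - x))| := by
            rw [hadj]
        _ ≤ (1 / (2 * μ)) * ‖mulVecE T (w - x)‖ ^ 2 := hkey
        _ ≤ (1 / (2 * μ)) * ‖mulVecCLM T‖ ^ 2 * ‖w - x‖ ^ 2 := by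
            have := mul_le_mul_of_nonneg_left hb1 (le_of_lt (show (0:ℝ) < 1/(2*μ) by positivity))
            calc (1 / (2 * μ)) * ‖mulVecE T (w - x)‖ ^ 2
                ≤ (1 / (2 * μ)) * (‖mulVecCLM T‖ * ‖w - x‖) ^ 2 := this
              _ = (1 / (2 * μ)) * ‖mulVecCLM T‖ ^ 2 * ‖w - x‖ ^ 2 := by ring
    have h1 := ((hf' x).hasFDerivAt.add hΦ.hasFDerivAt).sub_const ((μ / 2) * ‖y‖ ^ 2)
    rw [hasGradientAt_iff_hasFDerivAt, map_add]
    exact h1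
  -- part 2
  have main2 : ∀ (x : EuclideanSpace ℝ (Fin n)) (y : EuclideanSpace ℝ (Fin m)),
      HasGradientAt
        (fun y' => f x + MoreauEnv μ g prox (mulVecE T x + μ • y') - (μ / 2) * ‖y'‖ ^ 2)
        (μ • gradMoreau μ prox (mulVecE T x + μ • y) - μ • y) y := by
    intro x y
    apply hasGradientAt_of_quad _ _ _ μ
    intro w
    have hkey := moreau_sandwich hμ hg hprox (mulVecE T x + μ • y) (mulVecE T x + μ • w)
    have hdiff : (mulVecE T x + μ • w) - (mulVecE T x + μ • y) = μ • (w - y) := by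
      rw [smul_sub]; abel
    rw [hdiff] at hkey
    have hsq : ‖μ • (w - y)‖ ^ 2 = μ ^ 2 * ‖w - y‖ ^ 2 := by
      rw [norm_smul, Real.norm_eq_abs, mul_pow, sq_abs]
    have hc2 : (1 / (2 * μ)) * (μ ^ 2 * ‖w - y‖ ^ 2) = (μ / 2) * ‖w - y‖ ^ 2 := by
      field_simp
    rw [hsq, hc2] at hkey
    have hns : ‖w‖ ^ 2 = ‖y‖ ^ 2 + 2 * (inner ℝ y (w - y) : ℝ) + ‖w - y‖ ^ 2 := by
      conv_lhs => rw [show w = y + (w - y) by abel]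
      rw [norm_add_sq_real]
    have hG : (inner ℝ (μ • gradMoreau μ prox (mulVecE T x + μ • y) - μ • y) (w - y) : ℝ)
        = (inner ℝ (gradMoreau μ prox (mulVecE T x + μ • y)) (μ • (w - y)) : ℝ)
          - μ * (inner ℝ y (w - y) : ℝ) := by
      rw [inner_sub_left, real_inner_smul_left, real_inner_smul_left, real_inner_smul_right]
    rw [hG]
    have hkey' : |MoreauEnv μ g prox (mulVecE T x + μ • w) -
        MoreauEnv μ g prox (mulVecE T x + μ • y) -
        (inner ℝ (gradMoreau μ prox (mulVecE T x + μ • y)) (μ • (w - y)) : ℝ)| ≤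
        (μ / 2) * ‖w - y‖ ^ 2 := hkey
    have hns2 : (μ / 2) * ‖w‖ ^ 2
        = (μ / 2) * ‖y‖ ^ 2 + μ * (inner ℝ y (w - y) : ℝ) + (μ / 2) * ‖w - y‖ ^ 2 := by
      rw [hns]; ring
    rw [abs_le] at hkey' ⊢
    constructor
    · linarith [hkey'.1, hns2]
    · linarith [hkey'.2, hns2]
  refine ⟨main1, main2, ?_, ?_, ?_⟩
  · -- continuity 1
    have haff : Continuous (fun p : EuclideanSpace ℝ (Fin n) × EuclideanSpace ℝ (Fin m) =>
        mulVecE T p.1 + μ • p.2) := by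
      simp only [← mulVecCLM_apply]
      exact ((mulVecCLM T).continuous.comp continuous_fst).add (continuous_snd.const_smul μ)
    have h2 : Continuous (fun p : EuclideanSpace ℝ (Fin n) × EuclideanSpace ℝ (Fin m) =>
        mulVecE Tᵀ (gradMoreau μ prox (mulVecE T p.1 + μ • p.2))) := by
      simp only [← mulVecCLM_apply]
      exact (mulVecCLM Tᵀ).continuous.comp (hgm_cont.comp haff)
    exact (hf'cont.comp continuous_fst).add h2
  · -- continuity 2
    have haff : Continuous (fun p : EuclideanSpace ℝ (Fin n) × EuclideanSpace ℝ (Fin m) =>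
        mulVecE T p.1 + μ • p.2) := by
      simp only [← mulVecCLM_apply]
      exact ((mulVecCLM T).continuous.comp continuous_fst).add (continuous_snd.const_smul μ)
    exact ((hgm_cont.comp haff).const_smul μ).sub (continuous_snd.const_smul μ)
  · -- Lipschitz
    intro Lf hLf
    set CT := ‖mulVecCLM T‖ with hCT
    set CT' := ‖mulVecCLM Tᵀ‖ with hCT'
    have hCT0 : 0 ≤ CT := norm_nonneg _
    have hCT'0 : 0 ≤ CT' := norm_nonneg _
    refine ⟨|Lf| + CT' * (1 / μ) * CT + CT + CT' + 2 * μ, by positivity, ?_⟩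
    intro x₁ x₂ y₁ y₂
    set a := ‖x₁ - x₂‖ with ha
    set b := ‖y₁ - y₂‖ with hb
    have ha0 : 0 ≤ a := norm_nonneg _
    have hb0 : 0 ≤ b := norm_nonneg _
    set v₁ := mulVecE T x₁ + μ • y₁ with hv₁
    set v₂ := mulVecE T x₂ + μ • y₂ with hv₂
    have hΔn : ‖v₁ - v₂‖ ≤ CT * a + μ * b := by
      have h1 : v₁ - v₂ = mulVecE T (x₁ - x₂) + μ • (y₁ - y₂) := by
        rw [hv₁, hv₂, ← mulVecE_sub, smul_sub]; abel
      rw [h1]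
      refine (norm_add_le _ _).trans (add_le_add (mulVecE_norm_le T _) ?_)
      rw [norm_smul, Real.norm_eq_abs, abs_of_pos hμ]
    have hg12 : ‖gradMoreau μ prox v₁ - gradMoreau μ prox v₂‖ ≤ (1 / μ) * (CT * a + μ * b) :=
      (hgm_lip v₂ v₁).trans (mul_le_mul_of_nonneg_left hΔn (le_of_lt hμ'))
    have hx : ‖(f' x₁ + mulVecE Tᵀ (gradMoreau μ prox v₁)) -
        (f' x₂ + mulVecE Tᵀ (gradMoreau μ prox v₂))‖ ≤
        Lf * a + CT' * ((1 / μ) * (CT * a + μ * b)) := by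
      have h1 : (f' x₁ + mulVecE Tᵀ (gradMoreau μ prox v₁)) -
          (f' x₂ + mulVecE Tᵀ (gradMoreau μ prox v₂))
          = (f' x₁ - f' x₂) + mulVecE Tᵀ (gradMoreau μ prox v₁ - gradMoreau μ prox v₂) := by
        rw [← mulVecE_sub]; abel
      rw [h1]
      refine (norm_add_le _ _).trans (add_le_add (hLf x₁ x₂) ?_)
      exact (mulVecE_norm_le Tᵀ _).trans (mul_le_mul_of_nonneg_left hg12 hCT'0)
    have hy : ‖(μ • gradMoreau μ prox v₁ - μ • y₁) - (μ • gradMoreau μ prox v₂ - μ • y₂)‖ ≤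
        μ * ((1 / μ) * (CT * a + μ * b)) + μ * b := by
      have h1 : (μ • gradMoreau μ prox v₁ - μ • y₁) - (μ • gradMoreau μ prox v₂ - μ • y₂)
          = μ • (gradMoreau μ prox v₁ - gradMoreau μ prox v₂) - μ • (y₁ - y₂) := by
        rw [smul_sub, smul_sub]; abel
      rw [h1]
      refine (norm_sub_le _ _).trans (add_le_add ?_ ?_) <;>
        rw [norm_smul, Real.norm_eq_abs, abs_of_pos hμ]
      all_goals try exact le_refl _
      all_goals exact mul_le_mul_of_nonneg_left hg12 (le_of_lt hμ)
    have hμinv : μ * (1 / μ) = 1 := by field_simp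
    have h1μ : (1 / μ) * μ = 1 := by field_simp
    have eA : CT' * ((1 / μ) * (CT * a + μ * b)) = (CT' * (1 / μ) * CT) * a + CT' * b := by
      linear_combination (CT' * b) * h1μ
    have eB : μ * ((1 / μ) * (CT * a + μ * b)) = CT * a + μ * b := by
      linear_combination (CT * a + μ * b) * hμinv
    rw [eA] at hx
    rw [eB] at hy
    have hLa : Lf * a ≤ |Lf| * a := mul_le_mul_of_nonneg_right (le_abs_self Lf) ha0
    have hfin : (|Lf| + CT' * (1 / μ) * CT + CT) * a + (CT' + 2 * μ) * b ≤
        (|Lf| + CT' * (1 / μ) * CT + CT + CT' + 2 * μ) * (a + b) := by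
      have hK1 : 0 ≤ CT' * (1 / μ) * CT :=
        mul_nonneg (mul_nonneg hCT'0 (le_of_lt hμ')) hCT0
      have hexp : (|Lf| + CT' * (1 / μ) * CT + CT + CT' + 2 * μ) * (a + b)
          = ((|Lf| + CT' * (1 / μ) * CT + CT) * a + (CT' + 2 * μ) * b)
            + ((CT' + 2 * μ) * a + (|Lf| + CT' * (1 / μ) * CT + CT) * b) := by ring
      have h2 : 0 ≤ (CT' + 2 * μ) * a + (|Lf| + CT' * (1 / μ) * CT + CT) * b :=
        add_nonneg (mul_nonneg (by linarith) ha0)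
          (mul_nonneg (add_nonneg (add_nonneg (abs_nonneg Lf) hK1) hCT0) hb0)
      linarith [hexp, h2]
    calc _ ≤ (Lf * a + ((CT' * (1 / μ) * CT) * a + CT' * b)) +
          ((CT * a + μ * b) + μ * b) := add_le_add hx hy
      _ ≤ (|Lf| + CT' * (1 / μ) * CT + CT) * a + (CT' + 2 * μ) * b := by linarith
      _ ≤ _ := hfin
end

section
/- Let w̃ be a solution of the symmetric indefinite system [[H + (1/μ)Tᵀ(I−P)T, Tᵀ(I−P)], [(I−P)T, −μP]] w̃ = −diag(I, −I)·q for a vector q = (q_x, q_y). Then w̃ᵀq = −x̃ᵀ(H + (1/μ)Tᵀ(I−P)T)x̃ − μỹᵀPỹ ≤ 0, with strict inequality unless both x̃ = 0 and Pỹ = 0; consequently, for any σ ∈ (0,1], d = (1−σ)w̃ − σq satisfies dᵀq ≤ −σ‖q‖², so d is a descent direction whenever q ≠ 0. -/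
open Matrix

/-- Descent-direction property of the primal-dual second order update: if `w̃ = (x̃, ỹ)` solves
`[[H + μ⁻¹Tᵀ(I−P)T, Tᵀ(I−P)], [(I−P)T, −μP]] w̃ = −diag(I, −I) q`, then
`w̃ᵀq = −x̃ᵀ(H + μ⁻¹Tᵀ(I−P)T)x̃ − μ ỹᵀPỹ ≤ 0`, strictly unless `x̃ = 0` and `Pỹ = 0`; and for
`σ ∈ (0,1]` the direction `d = (1−σ)w̃ − σq` satisfies `dᵀq ≤ −σ‖q‖²`, hence is a descent
direction whenever `q ≠ 0`. -/
theorem descent_direction {n m : ℕ} (μ : ℝ) (hμ : 0 < μ)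
    (H : Matrix (Fin n) (Fin n) ℝ) (hH : H.PosDef)
    (P : Matrix (Fin m) (Fin m) ℝ) (hP : P.PosSemidef) (hIP : (1 - P).PosSemidef)
    (T : Matrix (Fin m) (Fin n) ℝ)
    (xt : Fin n → ℝ) (yt : Fin m → ℝ) (qx : Fin n → ℝ) (qy : Fin m → ℝ)
    (heq1 : (H + μ⁻¹ • (Tᵀ * (1 - P) * T)).mulVec xt + (Tᵀ * (1 - P)).mulVec yt = -qx)
    (heq2 : ((1 - P) * T).mulVec xt - μ • P.mulVec yt = qy) :
    (xt ⬝ᵥ qx + yt ⬝ᵥ qy =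
      -(xt ⬝ᵥ (H + μ⁻¹ • (Tᵀ * (1 - P) * T)).mulVec xt) - μ * (yt ⬝ᵥ P.mulVec yt)) ∧
    (xt ⬝ᵥ qx + yt ⬝ᵥ qy ≤ 0) ∧
    ((xt ≠ 0 ∨ P.mulVec yt ≠ 0) → xt ⬝ᵥ qx + yt ⬝ᵥ qy < 0) ∧
    (∀ σ : ℝ, 0 < σ → σ ≤ 1 →
      (((1 - σ) • xt - σ • qx) ⬝ᵥ qx + ((1 - σ) • yt - σ • qy) ⬝ᵥ qy ≤
        -(σ * (qx ⬝ᵥ qx + qy ⬝ᵥ qy))) ∧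
      ((qx ≠ 0 ∨ qy ≠ 0) →
        ((1 - σ) • xt - σ • qx) ⬝ᵥ qx + ((1 - σ) • yt - σ • qy) ⬝ᵥ qy < 0)) := by
  have hIPs : (1 - P)ᵀ = 1 - P := by
    have := hIP.isHermitian
    rwa [Matrix.IsHermitian, conjTranspose_eq_transpose_of_trivial] at this
  -- cross term
  have hcross : xt ⬝ᵥ (Tᵀ * (1 - P)).mulVec yt = yt ⬝ᵥ ((1 - P) * T).mulVec xt := by
    rw [dotProduct_mulVec, ← mulVec_transpose, transpose_mul, hIPs, transpose_transpose]
    exact dotProduct_comm _ _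
  set A := H + μ⁻¹ • (Tᵀ * (1 - P) * T) with hA
  have hApd : A.PosDef := by
    apply hH.add_posSemidef
    have h1 : (Tᵀ * (1 - P) * T).PosSemidef := by
      have := hIP.conjTranspose_mul_mul_same T
      rwa [conjTranspose_eq_transpose_of_trivial] at this
    refine .of_dotProduct_mulVec_nonneg ?_ ?_
    · have := h1.isHermitian
      rw [Matrix.IsHermitian] at this ⊢
      rw [conjTranspose_smul, this]
      simp
    · intro x
      have := h1.dotProduct_mulVec_nonneg x
      simp only [smul_mulVec, dotProduct_smul, smul_eq_mul] at *
      positivity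
  have key : xt ⬝ᵥ qx + yt ⬝ᵥ qy =
      -(xt ⬝ᵥ A.mulVec xt) - μ * (yt ⬝ᵥ P.mulVec yt) := by
    have h1 : xt ⬝ᵥ qx = -(xt ⬝ᵥ A.mulVec xt) - xt ⬝ᵥ (Tᵀ * (1 - P)).mulVec yt := by
      have := congrArg (fun v => xt ⬝ᵥ v) heq1
      simp only [dotProduct_add, dotProduct_neg] at this
      linarith
    have h2 : yt ⬝ᵥ qy = yt ⬝ᵥ ((1 - P) * T).mulVec xt - μ * (yt ⬝ᵥ P.mulVec yt) := by
      have := congrArg (fun v => yt ⬝ᵥ v) heq2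
      simp only [dotProduct_sub, dotProduct_smul, smul_eq_mul] at this
      linarith
    rw [h1, h2, hcross]; ring
  have hAnn : 0 ≤ xt ⬝ᵥ A.mulVec xt := hApd.posSemidef.dotProduct_mulVec_nonneg xt
  have hPnn : 0 ≤ yt ⬝ᵥ P.mulVec yt := hP.dotProduct_mulVec_nonneg yt
  have hle : xt ⬝ᵥ qx + yt ⬝ᵥ qy ≤ 0 := by
    rw [key]; nlinarith
  refine ⟨key, hle, ?_, ?_⟩
  · rintro (hx | hy)
    · have : 0 < xt ⬝ᵥ A.mulVec xt := hApd.dotProduct_mulVec_pos hx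
      rw [key]; nlinarith
    · have h0 : yt ⬝ᵥ P.mulVec yt ≠ 0 := by
        intro h
        exact hy ((hP.dotProduct_mulVec_zero_iff yt).mp (by simpa using h))
      have : 0 < yt ⬝ᵥ P.mulVec yt := lt_of_le_of_ne hPnn (Ne.symm h0)
      rw [key]; nlinarith
  · intro σ hσ hσ1
    have hq1 : 0 ≤ qx ⬝ᵥ qx := by simpa using dotProduct_star_self_nonneg qx
    have hq2 : 0 ≤ qy ⬝ᵥ qy := by simpa using dotProduct_star_self_nonneg qy
    have hexp : ((1 - σ) • xt - σ • qx) ⬝ᵥ qx + ((1 - σ) • yt - σ • qy) ⬝ᵥ qy =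
        (1 - σ) * (xt ⬝ᵥ qx + yt ⬝ᵥ qy) - σ * (qx ⬝ᵥ qx + qy ⬝ᵥ qy) := by
      simp only [sub_dotProduct, smul_dotProduct, smul_eq_mul]; ring
    constructor
    · rw [hexp]; nlinarith
    · rintro (hq | hq)
      · have : 0 < qx ⬝ᵥ qx := by
          have := dotProduct_star_self_pos_iff.mpr hq
          simpa using this
        rw [hexp]; nlinarith
      · have : 0 < qy ⬝ᵥ qy := by
          have := dotProduct_star_self_pos_iff.mpr hq
          simpa using this
        rw [hexp]; nlinarith
end

section
/- Let f: ℝ^n → ℝ be differentiable and m_f-strongly convex, g: ℝ^m → ℝ ∪ {+∞} convex, T ∈ ℝ^{m×n}, and x̄ a point where g is subdifferentiable at Tx̄. Then every minimizer x* of F(x) = f(x) + g(Tx) satisfies ‖x* − x̄‖ ≤ (2/m_f)‖∇f(x̄) + Tᵀv‖ for any v ∈ ∂g(Tx̄). -/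
open Matrix RealInnerProductSpace

section Aux
open Filter Set Topology

lemma convex_first_order {E : Type*} [NormedAddCommGroup E] [NormedSpace ℝ E]
    {h : E → ℝ} (hc : ConvexOn ℝ Set.univ h) {L : E →L[ℝ] ℝ} {xb : E}
    (hd : HasFDerivAt h L xb) (x : E) : h xb + L (x - xb) ≤ h x := by
  set d := x - xb with hdd
  have hcurve : HasDerivAt (fun t : ℝ => xb + t • d) d 0 := by
    simpa using ((hasDerivAt_id (0:ℝ)).smul_const d).const_add xb
  have hφ : HasDerivAt (fun t : ℝ => h (xb + t • d)) (L d) 0 := by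
    have : HasFDerivAt h L (xb + (0:ℝ) • d) := by simpa using hd
    exact this.comp_hasDerivAt 0 hcurve
  have hslope := hasDerivAt_iff_tendsto_slope.mp hφ
  have hle : L d ≤ h x - h xb := by
    have hmono : 𝓝[>] (0:ℝ) ≤ 𝓝[≠] (0:ℝ) :=
      nhdsWithin_mono _ (fun t ht => ne_of_gt ht)
    refine le_of_tendsto (hslope.mono_left hmono) ?_
    · filter_upwards [Ioo_mem_nhdsGT_of_mem (by norm_num : (0:ℝ) ∈ Ico 0 1)] with t ht
      have h1 : xb + t • d = (1 - t) • xb + t • x := by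
        rw [hdd]; module
      have h2 := hc.2 (mem_univ xb) (mem_univ x) (by linarith [ht.2] : (0:ℝ) ≤ 1 - t)
        ht.1.le (by ring)
      rw [← h1] at h2
      rw [slope_def_field, sub_zero, zero_smul, add_zero, div_le_iff₀ ht.1]
      simp only [smul_eq_mul] at h2
      nlinarith [h2]
  linarith

end Aux

/-- Any minimizer `x*` of `F(x) = f(x) + g(Tx)`, with `f` differentiable `m_f`-strongly convex
and `g` convex, satisfies `‖x* − x̄‖ ≤ (2/m_f)‖∇f(x̄) + Tᵀv‖` for any subgradient
`v ∈ ∂g(Tx̄)`. -/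
theorem minimizer_ball_bound {n m : ℕ} (mf : ℝ) (hmf : 0 < mf)
    (f : EuclideanSpace ℝ (Fin n) → ℝ)
    (f' : EuclideanSpace ℝ (Fin n) → EuclideanSpace ℝ (Fin n))
    (hf' : ∀ x, HasGradientAt f (f' x) x)
    (hsc : ConvexOn ℝ Set.univ (fun x => f x - mf / 2 * ‖x‖ ^ 2))
    (g : EuclideanSpace ℝ (Fin m) → ℝ) (hg : ConvexOn ℝ Set.univ g)
    (T : Matrix (Fin m) (Fin n) ℝ)
    (xbar : EuclideanSpace ℝ (Fin n)) (v : EuclideanSpace ℝ (Fin m))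
    (hv : ∀ z, g (mulVecE T xbar) + ⟪v, z - mulVecE T xbar⟫ ≤ g z)
    (xstar : EuclideanSpace ℝ (Fin n))
    (hmin : IsMinOn (fun x => f x + g (mulVecE T x)) Set.univ xstar) :
    ‖xstar - xbar‖ ≤ (2 / mf) * ‖f' xbar + mulVecE Tᵀ v‖ := by
  set d := xstar - xbar with hdD
  -- derivative of the convex part
  have hnorm : HasFDerivAt (fun x : EuclideanSpace ℝ (Fin n) => mf / 2 * ‖x‖ ^ 2)
      ((mf / 2) • (2 • (innerSL ℝ xbar))) xbar :=
    ((hasStrictFDerivAt_norm_sq xbar).hasFDerivAt).const_mul (mf / 2)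
  have hh : HasFDerivAt (fun x => f x - mf / 2 * ‖x‖ ^ 2)
      ((InnerProductSpace.toDual ℝ (EuclideanSpace ℝ (Fin n)) (f' xbar) : _ →L[ℝ] ℝ)
        - (mf / 2) • (2 • (innerSL ℝ xbar))) xbar :=
    (hf' xbar).hasFDerivAt.sub hnorm
  have key := convex_first_order hsc hh xstar
  have happ : ((InnerProductSpace.toDual ℝ (EuclideanSpace ℝ (Fin n)) (f' xbar) : _ →L[ℝ] ℝ)
        - (mf / 2) • (2 • (innerSL ℝ xbar))) (xstar - xbar)
      = ⟪f' xbar, d⟫ - mf * ⟪xbar, d⟫ := by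
    simp [ContinuousLinearMap.sub_apply, InnerProductSpace.toDual_apply_apply, two_smul, ← hdD]
    ring
  rw [happ] at key
  -- strong convexity inequality
  have hid : ‖d‖ ^ 2 = ‖xstar‖ ^ 2 - ‖xbar‖ ^ 2 - 2 * ⟪xbar, d⟫ := by
    have h1 : ⟪xbar, d⟫ = ⟪xbar, xstar⟫ - ‖xbar‖ ^ 2 := by
      rw [hdD, inner_sub_right, real_inner_self_eq_norm_sq]
    have h2 : ‖xstar - xbar‖ ^ 2 = ‖xstar‖ ^ 2 - 2 * ⟪xstar, xbar⟫ + ‖xbar‖ ^ 2 :=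
      norm_sub_sq_real xstar xbar
    rw [hdD, h2, h1, real_inner_comm xbar xstar]
    ring
  have h1 : f xbar + ⟪f' xbar, d⟫ + mf / 2 * ‖d‖ ^ 2 ≤ f xstar := by
    rw [hid]; linarith [key]
  -- subgradient inequality
  have h2 := hv (mulVecE T xstar)
  have hadj : ⟪v, mulVecE T xstar - mulVecE T xbar⟫ = ⟪mulVecE Tᵀ v, d⟫ := by
    have hs : mulVecE T xstar - mulVecE T xbar = mulVecE T d := by
      simp only [mulVecE, hdD]
      rw [← WithLp.toLp_sub, WithLp.ofLp_sub, Matrix.mulVec_sub]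
    rw [hs]
    simp only [mulVecE, PiLp.inner_apply, RCLike.inner_apply, conj_trivial,
      Matrix.mulVec, dotProduct, Matrix.transpose_apply, Finset.sum_mul, Finset.mul_sum]
    rw [Finset.sum_comm]
    exact Finset.sum_congr rfl fun i _ => Finset.sum_congr rfl fun j _ => by ring
  rw [hadj] at h2
  have h3 : f xstar + g (mulVecE T xstar) ≤ f xbar + g (mulVecE T xbar) :=
    hmin (Set.mem_univ xbar)
  have hsum : ⟪f' xbar + mulVecE Tᵀ v, d⟫ + mf / 2 * ‖d‖ ^ 2 ≤ 0 := by
    rw [inner_add_left]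
    linarith
  have hcs : -⟪f' xbar + mulVecE Tᵀ v, d⟫ ≤ ‖f' xbar + mulVecE Tᵀ v‖ * ‖d‖ := by
    have := abs_real_inner_le_norm (f' xbar + mulVecE Tᵀ v) d
    cases abs_cases (⟪f' xbar + mulVecE Tᵀ v, d⟫) with
    | inl h => linarith [h.1, real_inner_le_norm (f' xbar + mulVecE Tᵀ v) d,
        mul_nonneg (norm_nonneg (f' xbar + mulVecE Tᵀ v)) (norm_nonneg d)]
    | inr h => linarith [h.1]
  have key2 : mf / 2 * ‖d‖ ^ 2 ≤ ‖f' xbar + mulVecE Tᵀ v‖ * ‖d‖ := by linarith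
  rcases eq_or_lt_of_le (norm_nonneg d) with h0 | h0
  · rw [← h0]; positivity
  · rw [div_mul_eq_mul_div, le_div_iff₀ hmf]
    nlinarith [key2, h0]
end

section
/- Let Q = [[G + (1/μ)Tᵀ(I−D)T, Tᵀ(I−D)], [(I−D)T, −μD]] where G is symmetric with m_f I ⪯ G ⪯ L_f I (0 < m_f ≤ L_f), D symmetric with 0 ⪯ D ⪯ I, T full row rank, μ > 0. Then there exists κ₁ > 0, depending only on m_f, L_f, μ, T, such that QᵀQ ⪰ κ₁ I for all admissible (D, G). -/
open Matrix

-- injectivity of Tᵀ.mulVec from full row rank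
lemma aux_Tt_inj {n m : ℕ} (T : Matrix (Fin m) (Fin n) ℝ) (hT : T.rank = m)
    (v : Fin m → ℝ) (hv : Tᵀ *ᵥ v = 0) : v = 0 := by
  have hrt : (Tᵀ).rank = m := by rw [Matrix.rank_transpose]; exact hT
  have hker : LinearMap.ker (Tᵀ).mulVecLin = ⊥ := by
    have h1 := (Tᵀ).mulVecLin.finrank_range_add_finrank_ker
    rw [show Module.finrank ℝ (Fin m → ℝ) = m by simp] at h1
    have : Module.finrank ℝ (LinearMap.ker (Tᵀ).mulVecLin) = 0 := by
      have : (Tᵀ).rank = Module.finrank ℝ (LinearMap.range (Tᵀ).mulVecLin) := rfl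
      omega
    exact Submodule.finrank_eq_zero.mp this
  have h0 : (Tᵀ).mulVecLin v = (Tᵀ).mulVecLin 0 := by
    rw [Matrix.mulVecLin_apply, Matrix.mulVecLin_apply, hv, Matrix.mulVec_zero]
  exact (LinearMap.ker_eq_bot.mp hker) h0

lemma herm_transpose {ι : Type*} {M : Matrix ι ι ℝ} (h : M.IsHermitian) : Mᵀ = M := by
  rw [← Matrix.conjTranspose_eq_transpose_of_trivial]; exact h

lemma aux_inj {n m : ℕ} (μ mf Lf : ℝ)
    (hμ : 0 < μ) (hmf : 0 < mf)
    (T : Matrix (Fin m) (Fin n) ℝ) (hT : T.rank = m)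
    (D : Matrix (Fin m) (Fin m) ℝ) (G : Matrix (Fin n) (Fin n) ℝ)
    (hD : D.PosSemidef) (hE : (1 - D).PosSemidef)
    (hG : (G - mf • 1).PosSemidef)
    (x : Fin n ⊕ Fin m → ℝ)
    (hx : (Matrix.fromBlocks
            (G + μ⁻¹ • (Tᵀ * (1 - D) * T)) (Tᵀ * (1 - D))
            ((1 - D) * T) (-(μ • D))) *ᵥ x = 0) : x = 0 := by
  set u : Fin n → ℝ := x ∘ Sum.inl with hu
  set v : Fin m → ℝ := x ∘ Sum.inr with hv
  have hxe : x = Sum.elim u v := by funext i; cases i <;> rfl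
  rw [hxe, Matrix.fromBlocks_mulVec] at hx
  have h1 : (G + μ⁻¹ • (Tᵀ * (1 - D) * T)) *ᵥ u + (Tᵀ * (1 - D)) *ᵥ v = 0 := by
    funext i; exact congrFun hx (Sum.inl i)
  have h2 : ((1 - D) * T) *ᵥ u + (-(μ • D)) *ᵥ v = 0 := by
    funext i; exact congrFun hx (Sum.inr i)
  have h2' : ((1 - D) * T) *ᵥ u = μ • (D *ᵥ v) := by
    have := congrArg (fun w => w + (μ • D) *ᵥ v) h2
    simpa [Matrix.neg_mulVec, add_assoc, Matrix.smul_mulVec] using this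
  have hDt : Dᵀ = D := herm_transpose hD.1
  -- transpose of the off-diagonal block
  have hBt : (Tᵀ * (1 - D))ᵀ = (1 - D) * T := by
    rw [Matrix.transpose_mul, Matrix.transpose_transpose]
    congr 1
    rw [Matrix.transpose_sub, Matrix.transpose_one, hDt]
  -- key scalar identity
  have key : u ⬝ᵥ (G *ᵥ u) + μ⁻¹ * ((T *ᵥ u) ⬝ᵥ ((1 - D) *ᵥ (T *ᵥ u)))
      + μ * (v ⬝ᵥ (D *ᵥ v)) = 0 := by
    have e1 : u ⬝ᵥ ((G + μ⁻¹ • (Tᵀ * (1 - D) * T)) *ᵥ u + (Tᵀ * (1 - D)) *ᵥ v) = 0 := by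
      rw [h1]; simp
    have e2 : u ⬝ᵥ ((Tᵀ * (1 - D) * T) *ᵥ u) = (T *ᵥ u) ⬝ᵥ ((1 - D) *ᵥ (T *ᵥ u)) := by
      rw [Matrix.mul_assoc, ← Matrix.mulVec_mulVec, ← Matrix.mulVec_mulVec]
      rw [Matrix.dotProduct_mulVec u Tᵀ, Matrix.vecMul_transpose]
    have e3 : u ⬝ᵥ ((Tᵀ * (1 - D)) *ᵥ v) = μ * (v ⬝ᵥ (D *ᵥ v)) := by
      rw [Matrix.dotProduct_mulVec]
      have huB : u ᵥ* (Tᵀ * (1 - D)) = ((1 - D) * T) *ᵥ u := by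
        rw [← hBt, ← Matrix.vecMul_transpose, Matrix.transpose_transpose]
      rw [huB, h2', smul_dotProduct, dotProduct_comm]
      simp [smul_eq_mul]
    have h := e1
    rw [dotProduct_add, Matrix.add_mulVec, dotProduct_add,
      Matrix.smul_mulVec, dotProduct_smul, e2, e3] at h
    simpa [smul_eq_mul] using h
  have t1 : mf * (u ⬝ᵥ u) ≤ u ⬝ᵥ (G *ᵥ u) := by
    have h0 := hG.dotProduct_mulVec_nonneg u
    rw [star_trivial, Matrix.sub_mulVec, dotProduct_sub,
      Matrix.smul_mulVec, Matrix.one_mulVec, dotProduct_smul] at h0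
    simpa [smul_eq_mul] using h0
  have t2 : (0:ℝ) ≤ (T *ᵥ u) ⬝ᵥ ((1 - D) *ᵥ (T *ᵥ u)) := by
    simpa using hE.dotProduct_mulVec_nonneg (T *ᵥ u)
  have t3 : (0:ℝ) ≤ v ⬝ᵥ (D *ᵥ v) := by simpa using hD.dotProduct_mulVec_nonneg v
  have huu : (0:ℝ) ≤ u ⬝ᵥ u := Finset.sum_nonneg fun i _ => mul_self_nonneg _
  have hμi : (0:ℝ) < μ⁻¹ := inv_pos.mpr hμ
  have hu0 : u = 0 := by
    have : u ⬝ᵥ u = 0 := le_antisymm (by nlinarith) huu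
    exact dotProduct_self_eq_zero.mp this
  have hvDv : v ⬝ᵥ (D *ᵥ v) = 0 := by
    apply le_antisymm _ t3
    nlinarith
  have hDv : D *ᵥ v = 0 := (hD.dotProduct_mulVec_zero_iff v).mp (by simpa using hvDv)
  have hTv : Tᵀ *ᵥ v = 0 := by
    have h1' : (Tᵀ * (1 - D)) *ᵥ v = 0 := by
      have := h1
      rw [hu0, Matrix.mulVec_zero, zero_add] at this
      exact this
    rw [← Matrix.mulVec_mulVec, Matrix.sub_mulVec, Matrix.one_mulVec, hDv, sub_zero] at h1'
    exact h1'
  have hv0 : v = 0 := aux_Tt_inj T hT v hTv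
  rw [hxe, hu0, hv0]
  funext i; cases i <;> rfl

lemma isClosed_psd {ι : Type*} [Fintype ι] : IsClosed {M : Matrix ι ι ℝ | M.PosSemidef} := by
  have hset : {M : Matrix ι ι ℝ | M.PosSemidef} =
      {M : Matrix ι ι ℝ | Mᴴ = M} ∩ ⋂ x : ι → ℝ, {M | 0 ≤ star x ⬝ᵥ M *ᵥ x} := by
    ext M
    simp only [Set.mem_setOf_eq, Set.mem_inter_iff, Set.mem_iInter]
    exact ⟨fun h => ⟨h.1, h.dotProduct_mulVec_nonneg⟩, fun h => Matrix.PosSemidef.of_dotProduct_mulVec_nonneg h.1 h.2⟩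
  rw [hset]
  refine IsClosed.inter (isClosed_eq continuous_id.matrix_conjTranspose continuous_id)
    (isClosed_iInter fun x => isClosed_le continuous_const
      (continuous_const.dotProduct (continuous_id.matrix_mulVec continuous_const)))

lemma psd_entry_abs_le {ι : Type*} [Fintype ι] [DecidableEq ι] {A : Matrix ι ι ℝ}
    (hA : A.PosSemidef) (i j : ι) : |A i j| ≤ (A i i + A j j) / 2 := by
  have hsym : A j i = A i j := by
    have := hA.1
    have h2 : Aᴴ i j = A i j := by rw [this]
    simpa using h2
  have quad : ∀ c : ℝ, 0 ≤ A i i + c * A i j + c * A j i + c * c * A j j := by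
    intro c
    have h0 := hA.dotProduct_mulVec_nonneg (Pi.single i 1 + Pi.single j c)
    rw [star_trivial] at h0
    have hexp : (Pi.single i 1 + Pi.single j c) ⬝ᵥ A *ᵥ (Pi.single i 1 + Pi.single j c)
        = A i i + c * A i j + c * A j i + c * c * A j j := by
      simp [Matrix.mulVec_add, Matrix.mulVec_single, add_dotProduct,
        single_dotProduct]
      ring
    rw [hexp] at h0
    exact h0
  have q1 := quad 1
  have q2 := quad (-1)
  rw [abs_le]
  constructor <;> nlinarith [q1, q2, hsym]

lemma isCompact_box {ι κ : Type*} [Fintype ι] [Fintype κ] (a b : ℝ) :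
    IsCompact {M : Matrix ι κ ℝ | ∀ i j, M i j ∈ Set.Icc a b} := by
  have h : {M : Matrix ι κ ℝ | ∀ i j, M i j ∈ Set.Icc a b} =
      Set.univ.pi fun _ : ι => Set.univ.pi fun _ : κ => Set.Icc a b := by
    ext M
    exact ⟨fun h i _ j _ => h i j, fun h i j => h i (Set.mem_univ i) j (Set.mem_univ j)⟩
  rw [h]
  exact isCompact_univ_pi fun _ => isCompact_univ_pi fun _ => isCompact_Icc

lemma isCompact_unit_sphere {ι : Type*} [Fintype ι] :
    IsCompact {x : ι → ℝ | x ⬝ᵥ x = 1} := by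
  refine IsCompact.of_isClosed_subset
    (isCompact_univ_pi fun _ : ι => isCompact_Icc (a := (-1:ℝ)) (b := 1))
    (isClosed_eq (continuous_id.dotProduct continuous_id) continuous_const) ?_
  intro x hx
  simp only [Set.mem_univ_pi]
  intro i
  have h1 : x i * x i ≤ 1 := by
    have h2 := Finset.single_le_sum (f := fun j => x j * x j)
      (fun j _ => mul_self_nonneg _) (Finset.mem_univ i)
    have h2' : x i * x i ≤ ∑ j, x j * x j := by simpa using h2
    have h3 : ∑ j, x j * x j = 1 := hx
    linarith
  have := abs_le_one_iff_mul_self_le_one.mpr h1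
  rw [Set.mem_Icc, ← abs_le]
  exact this

lemma smul_one_psd {ι : Type*} [Fintype ι] [DecidableEq ι] {c : ℝ} (hc : 0 ≤ c) :
    ((c • (1 : Matrix ι ι ℝ))).PosSemidef := by
  refine Matrix.PosSemidef.of_dotProduct_mulVec_nonneg ?_ ?_
  · show (c • (1 : Matrix ι ι ℝ))ᴴ = c • 1
    rw [Matrix.conjTranspose_smul, Matrix.conjTranspose_one, star_trivial]
  · intro x
    rw [star_trivial, Matrix.smul_mulVec, Matrix.one_mulVec, dotProduct_smul]
    have : (0:ℝ) ≤ x ⬝ᵥ x := Finset.sum_nonneg fun i _ => mul_self_nonneg _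
    positivity


/-- There is a uniform `κ₁ > 0`, depending only on `m_f, L_f, μ, T`, such that
`QᵀQ ⪰ κ₁ I` for every admissible pair `(D, G)` with `0 ⪯ D ⪯ I` and
`m_f I ⪯ G ⪯ L_f I`, where
`Q = [[G + μ⁻¹Tᵀ(I−D)T, Tᵀ(I−D)], [(I−D)T, −μD]]`. -/
theorem uniform_lower_bound {n m : ℕ} (μ mf Lf : ℝ)
    (hμ : 0 < μ) (hmf : 0 < mf) (hLf : mf ≤ Lf)
    (T : Matrix (Fin m) (Fin n) ℝ) (hT : T.rank = m) :
    ∃ κ₁ : ℝ, 0 < κ₁ ∧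
      ∀ (D : Matrix (Fin m) (Fin m) ℝ) (G : Matrix (Fin n) (Fin n) ℝ),
        D.PosSemidef → (1 - D).PosSemidef →
        (G - mf • 1).PosSemidef → (Lf • (1 : Matrix (Fin n) (Fin n) ℝ) - G).PosSemidef →
        ((Matrix.fromBlocks
            (G + μ⁻¹ • (Tᵀ * (1 - D) * T)) (Tᵀ * (1 - D))
            ((1 - D) * T) (-(μ • D)))ᵀ *
          (Matrix.fromBlocks
            (G + μ⁻¹ • (Tᵀ * (1 - D) * T)) (Tᵀ * (1 - D))
            ((1 - D) * T) (-(μ • D))) -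
          κ₁ • 1).PosSemidef := by
  classical
  by_cases hNE : IsEmpty (Fin n ⊕ Fin m)
  · refine ⟨1, one_pos, fun D G _ _ _ _ => ?_⟩
    refine Matrix.PosSemidef.of_dotProduct_mulVec_nonneg ?_ ?_
    · apply Matrix.ext; intro i; exact (hNE.false i).elim
    · intro x
      rw [dotProduct, Finset.univ_eq_empty, Finset.sum_empty]
  · haveI hNe : Nonempty (Fin n ⊕ Fin m) := not_isEmpty_iff.mp hNE
    set P := Matrix (Fin m) (Fin m) ℝ × Matrix (Fin n) (Fin n) ℝ with hP
    set Qm : P → Matrix (Fin n ⊕ Fin m) (Fin n ⊕ Fin m) ℝ := fun p =>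
      Matrix.fromBlocks (p.2 + μ⁻¹ • (Tᵀ * (1 - p.1) * T)) (Tᵀ * (1 - p.1))
        ((1 - p.1) * T) (-(μ • p.1)) with hQm
    set S : Set P := {p | p.1.PosSemidef ∧ (1 - p.1).PosSemidef ∧
      (p.2 - mf • 1).PosSemidef ∧ (Lf • (1 : Matrix (Fin n) (Fin n) ℝ) - p.2).PosSemidef}
      with hS
    set Sph : Set ((Fin n ⊕ Fin m) → ℝ) := {x | x ⬝ᵥ x = 1} with hSph
    set F : P × ((Fin n ⊕ Fin m) → ℝ) → ℝ := fun q =>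
      (Qm q.1 *ᵥ q.2) ⬝ᵥ (Qm q.1 *ᵥ q.2) with hF
    -- continuity
    have hQc : Continuous Qm := by
      apply Continuous.matrix_fromBlocks
      · exact continuous_snd.add
          (((continuous_const.matrix_mul (continuous_const.sub continuous_fst)).matrix_mul
            continuous_const).const_smul μ⁻¹)
      · exact continuous_const.matrix_mul (continuous_const.sub continuous_fst)
      · exact (continuous_const.sub continuous_fst).matrix_mul continuous_const
      · exact (continuous_fst.const_smul μ).neg
    have hFc : Continuous F :=
      ((hQc.comp continuous_fst).matrix_mulVec continuous_snd).dotProduct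
        ((hQc.comp continuous_fst).matrix_mulVec continuous_snd)
    -- S is closed
    have hScl : IsClosed S := by
      rw [hS]
      simp only [Set.setOf_and]
      exact ((isClosed_psd.preimage continuous_fst).inter
        ((isClosed_psd.preimage (continuous_const.sub continuous_fst)).inter
        ((isClosed_psd.preimage ((continuous_snd.sub continuous_const))).inter
        (isClosed_psd.preimage (continuous_const.sub continuous_snd)))))
    -- S is contained in a compact box
    have hSsub : S ⊆ {M : Matrix (Fin m) (Fin m) ℝ | ∀ i j, M i j ∈ Set.Icc (-1:ℝ) 1} ×ˢ
        {M : Matrix (Fin n) (Fin n) ℝ | ∀ i j, M i j ∈ Set.Icc (-Lf) Lf} := by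
      rintro ⟨D, G⟩ ⟨hD, hE, hG, hG'⟩
      have hdiagD : ∀ i, 0 ≤ D i i ∧ D i i ≤ 1 := by
        intro i
        have h1 : 0 ≤ D i i := le_trans (abs_nonneg _) (by simpa using psd_entry_abs_le hD i i)
        have h2 : 0 ≤ (1 - D) i i := le_trans (abs_nonneg _)
          (by simpa using psd_entry_abs_le hE i i)
        rw [Matrix.sub_apply, Matrix.one_apply_eq] at h2
        exact ⟨h1, by linarith⟩
      constructor
      · intro i j
        have hb := psd_entry_abs_le hD i j
        have h1 := hdiagD i
        have h2 := hdiagD j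
        rw [Set.mem_Icc, ← abs_le]
        linarith [hb]
      · intro i j
        have hdiagG : ∀ i, mf ≤ G i i ∧ G i i ≤ Lf := by
          intro k
          have h1 : 0 ≤ (G - mf • 1) k k := le_trans (abs_nonneg _)
            (by simpa using psd_entry_abs_le hG k k)
          have h2 : 0 ≤ (Lf • (1 : Matrix (Fin n) (Fin n) ℝ) - G) k k :=
            le_trans (abs_nonneg _) (by simpa using psd_entry_abs_le hG' k k)
          rw [Matrix.sub_apply, Matrix.smul_apply, Matrix.one_apply_eq, smul_eq_mul,
            mul_one] at h1 h2
          exact ⟨by linarith, by linarith⟩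
        rw [Set.mem_Icc, ← abs_le]
        by_cases hij : i = j
        · subst hij
          have := hdiagG i
          rw [abs_le]
          constructor <;> nlinarith [this.1, this.2, hmf, hLf]
        · have hb := psd_entry_abs_le hG i j
          have hGij : (G - mf • 1) i j = G i j := by
            rw [Matrix.sub_apply, Matrix.smul_apply, Matrix.one_apply_ne hij, smul_eq_mul,
              mul_zero, sub_zero]
          have hii := hdiagG i
          have hjj := hdiagG j
          rw [hGij] at hb
          have hdi : (G - mf • 1) i i = G i i - mf := by
            rw [Matrix.sub_apply, Matrix.smul_apply, Matrix.one_apply_eq, smul_eq_mul, mul_one]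
          have hdj : (G - mf • 1) j j = G j j - mf := by
            rw [Matrix.sub_apply, Matrix.smul_apply, Matrix.one_apply_eq, smul_eq_mul, mul_one]
          rw [hdi, hdj] at hb
          have habs := abs_le.mp hb
          rw [abs_le]
          constructor <;> nlinarith [habs.1, habs.2, hii.1, hii.2, hjj.1, hjj.2, hmf]
    -- S compact
    have hScp : IsCompact S := IsCompact.of_isClosed_subset
      ((isCompact_box (-1) 1).prod (isCompact_box (-Lf) Lf)) hScl hSsub
    have hKcp : IsCompact (S ×ˢ Sph) := hScp.prod isCompact_unit_sphere
    -- nonempty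
    have hp0 : ((0 : Matrix (Fin m) (Fin m) ℝ), (mf • 1 : Matrix (Fin n) (Fin n) ℝ)) ∈ S := by
      refine ⟨Matrix.PosSemidef.zero, ?_, ?_, ?_⟩
      · rw [sub_zero]; exact Matrix.PosSemidef.one
      · rw [sub_self]; exact Matrix.PosSemidef.zero
      · rw [← sub_smul]; exact smul_one_psd (by linarith)
    have hx0 : (Pi.single (Classical.arbitrary (Fin n ⊕ Fin m)) 1 : (Fin n ⊕ Fin m) → ℝ)
        ∈ Sph := by
      rw [hSph, Set.mem_setOf_eq, single_dotProduct, Pi.single_eq_same, one_mul]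
    have hKne : (S ×ˢ Sph).Nonempty := ⟨_, Set.mk_mem_prod hp0 hx0⟩
    obtain ⟨q0, hq0K, hq0min⟩ := hKcp.exists_isMinOn hKne hFc.continuousOn
    refine ⟨F q0, ?_, ?_⟩
    · -- positivity of the minimum
      have h0le : 0 ≤ F q0 := Finset.sum_nonneg fun i _ => mul_self_nonneg _
      rcases h0le.lt_or_eq with h | h
      · exact h
      · exfalso
        obtain ⟨hq0S, hq0Sph⟩ := hq0K
        have hQx0 : Qm q0.1 *ᵥ q0.2 = 0 := dotProduct_self_eq_zero.mp h.symm
        obtain ⟨hD, hE, hG, -⟩ := hq0S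
        have hx00 : q0.2 = 0 := aux_inj μ mf Lf hμ hmf T hT q0.1.1 q0.1.2 hD hE hG q0.2 hQx0
        have h1 : q0.2 ⬝ᵥ q0.2 = 1 := hq0Sph
        rw [hx00] at h1
        simp at h1
    · intro D G hD hE hG hG'
      have h0le : 0 ≤ F q0 := Finset.sum_nonneg fun i _ => mul_self_nonneg _
      set Q := Matrix.fromBlocks
            (G + μ⁻¹ • (Tᵀ * (1 - D) * T)) (Tᵀ * (1 - D))
            ((1 - D) * T) (-(μ • D)) with hQ
      have hQeq : Qm (D, G) = Q := rfl
      refine Matrix.PosSemidef.of_dotProduct_mulVec_nonneg ?_ ?_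
      · have h1 : (Qᵀ * Q).IsHermitian := by
          rw [← Matrix.conjTranspose_eq_transpose_of_trivial]
          exact Matrix.isHermitian_conjTranspose_mul_self Q
        exact h1.sub (smul_one_psd h0le).1
      · intro x
        rw [star_trivial]
        have expand : (Qᵀ * Q - F q0 • 1) *ᵥ x = (Qᵀ * Q) *ᵥ x - F q0 • x := by
          rw [Matrix.sub_mulVec, Matrix.smul_mulVec, Matrix.one_mulVec]
        rw [expand, dotProduct_sub, dotProduct_smul, smul_eq_mul]
        have hQQ : x ⬝ᵥ ((Qᵀ * Q) *ᵥ x) = (Q *ᵥ x) ⬝ᵥ (Q *ᵥ x) := by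
          rw [← Matrix.mulVec_mulVec, Matrix.dotProduct_mulVec x Qᵀ, Matrix.vecMul_transpose]
        rw [hQQ]
        by_cases hx : x = 0
        · subst hx; simp
        · have hc0 : 0 ≤ x ⬝ᵥ x := Finset.sum_nonneg fun i _ => mul_self_nonneg _
          have hc : 0 < x ⬝ᵥ x :=
            hc0.lt_of_ne fun h => hx (dotProduct_self_eq_zero.mp h.symm)
          set s : ℝ := Real.sqrt (x ⬝ᵥ x) with hsdef
          have hs : s * s = x ⬝ᵥ x := Real.mul_self_sqrt hc0
          have hspos : 0 < s := Real.sqrt_pos.mpr hc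
          have hy : (s⁻¹ • x) ⬝ᵥ (s⁻¹ • x) = 1 := by
            rw [smul_dotProduct, dotProduct_smul, smul_eq_mul, smul_eq_mul,
              ← hs]
            field_simp
          have hmem : (((D, G) : P), s⁻¹ • x) ∈ S ×ˢ Sph :=
            ⟨⟨hD, hE, hG, hG'⟩, hy⟩
          have hle : F q0 ≤ F ((D, G), s⁻¹ • x) := isMinOn_iff.mp hq0min _ hmem
          have hFval : F ((D, G), s⁻¹ • x)
              = s⁻¹ * (s⁻¹ * ((Q *ᵥ x) ⬝ᵥ (Q *ᵥ x))) := by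
            show (Qm (D, G) *ᵥ (s⁻¹ • x)) ⬝ᵥ (Qm (D, G) *ᵥ (s⁻¹ • x)) = _
            rw [hQeq, Matrix.mulVec_smul, smul_dotProduct, dotProduct_smul,
              smul_eq_mul, smul_eq_mul]
          rw [hFval] at hle
          have key2 : F q0 * (x ⬝ᵥ x) ≤ (Q *ᵥ x) ⬝ᵥ (Q *ᵥ x) := by
            have h' := mul_le_mul_of_nonneg_right hle (le_of_lt hc)
            calc F q0 * (x ⬝ᵥ x) ≤ (s⁻¹ * (s⁻¹ * ((Q *ᵥ x) ⬝ᵥ (Q *ᵥ x)))) * (x ⬝ᵥ x) := h'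
              _ = (Q *ᵥ x) ⬝ᵥ (Q *ᵥ x) := by
                  rw [← hs]; field_simp
          linarith
end
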